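/- arXiv:2401.06739 — 8 statements merged into one kernel-verified Lean document; each statement's English description precedes it below -/
import Mathlib

section
/- Let C ⊆ ℱ be a nonempty compact set, let I ⊆ 𝒫, and let (c_m, d_m) ∈ 𝒫 \ I be such that r_{c_m,d_m}(z) > r_{c,d}(z) for all (c,d) ∈ I and all z ∈ C. Then sup_{z∈C} ( Σ_{(c,d)∈I} |σ^{(n)}_{c,d}(z)| ) / |σ^{(n)}_{c_m,d_m}(z)| → 0 as n → ∞. -/
open Filter Topology Set

/-- `σ_{c,d}(z) = exp(2πi m (az+b)/(cz+d)) / (cz+d)^k` with the concrete Bézout choice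
`a = gcdB c d`, `b = -gcdA c d` (so that `a*d - b*c = gcd c d = 1` for coprime `c,d`;
the value is independent of this choice since `m` is an integer). -/
noncomputable def sigmaP (k m : ℕ) (c d : ℤ) (z : ℂ) : ℂ :=
  Complex.exp (2 * Real.pi * Complex.I * (m : ℂ) *
      ((Int.gcdB c d : ℂ) * z - (Int.gcdA c d : ℂ)) / ((c : ℂ) * z + (d : ℂ))) /
    ((c : ℂ) * z + (d : ℂ)) ^ k

/-- The index set `𝒫`: coprime pairs `(c,d)` with `c > 0`, together with `(0,1)`. -/
def Pset : Set (ℤ × ℤ) := {p | (IsCoprime p.1 p.2 ∧ 0 < p.1) ∨ p = (0, 1)}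

/-- The Poincaré series `P_{k,m}(z) = Σ_{(c,d)∈𝒫} σ_{c,d}(z)`. -/
noncomputable def poincareP (k m : ℕ) (z : ℂ) : ℂ :=
  ∑' p : Pset, sigmaP k m p.1.1 p.1.2 z

/-- `r_{c,d}(z) = exp(-2πα · Im z/|cz+d|²)/|cz+d|`. -/
noncomputable def rP (α : ℝ) (c d : ℤ) (z : ℂ) : ℝ :=
  Real.exp (-2 * Real.pi * α * z.im / ‖(c : ℂ) * z + (d : ℂ)‖ ^ 2) /
    ‖(c : ℂ) * z + (d : ℂ)‖

/-- The standard fundamental domain `ℱ` for `SL(2,ℤ)`. -/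
noncomputable def Fdom : Set ℂ :=
  {z | 0 < z.im ∧ ((1 < ‖z‖ ∧ z.re ∈ Set.Ioc (-(1/2) : ℝ) (1/2 : ℝ)) ∨
    (‖z‖ = 1 ∧ Complex.arg z ∈ Set.Icc (Real.pi / 3) (Real.pi / 2)))}

/-- `F(t) = (1/(4π)) · (1/4+t²)·log(1/4+t²) / (t·(t²-3/4))`. -/
noncomputable def Ffun (t : ℝ) : ℝ :=
  (1 / (4 * Real.pi)) * ((1/4 + t^2) * Real.log (1/4 + t^2)) / (t * (t^2 - 3/4))

/-- The arc `𝒜 = {e^{iθ} : θ ∈ [π/3, π/2]}`. -/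
noncomputable def arcA : Set ℂ :=
  {z | ∃ θ ∈ Set.Icc (Real.pi / 3) (Real.pi / 2), z = Complex.exp (θ * Complex.I)}

/-- The segment `ℒ_ρ = {1/2 + ti : t ≥ √3/2}`. -/
noncomputable def lineRho : Set ℂ :=
  {z | ∃ t : ℝ, Real.sqrt 3 / 2 ≤ t ∧ z = 1/2 + t * Complex.I}

/-- The segment `ℒ_i = {ti : t ≥ 1}`. -/
def lineI : Set ℂ := {z | ∃ t : ℝ, 1 ≤ t ∧ z = t * Complex.I}

/-- The curve `Γ_α = {z ∈ ℱ : |z| > 1, 2πα·Im z = log|z|/(1-|z|⁻²)}`. -/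
noncomputable def GammaA (α : ℝ) : Set ℂ :=
  {z | z ∈ Fdom ∧ 1 < ‖z‖ ∧
    2 * Real.pi * α * z.im = Real.log (‖z‖) / (1 - ((‖z‖) ^ 2)⁻¹)}

/-! ### Auxiliary lemmas -/

lemma quad_lb (z : ℂ) (c d : ℤ) :
    ((c:ℝ)^2 + (d:ℝ)^2) * z.im^2 ≤
      (‖(c:ℂ)*z + d‖)^2 * (‖z‖^2 + 1) := by
  have h1 : (‖(c:ℂ)*z + d‖)^2 = ((c:ℝ)*z.re + d)^2 + ((c:ℝ)*z.im)^2 := by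
    rw [Complex.sq_norm, Complex.normSq_apply]
    simp [Complex.add_re, Complex.add_im, Complex.mul_re, Complex.mul_im]
    ring
  have h2 : (‖z‖)^2 = z.re^2 + z.im^2 := by
    rw [Complex.sq_norm, Complex.normSq_apply]; ring
  rw [h1, h2]
  nlinarith [sq_nonneg (((c:ℝ)*z.re + d)*z.re + (c:ℝ)*z.im^2), sq_nonneg ((c:ℝ)*z.re + d)]

lemma sigma_abs (k m : ℕ) (c d : ℤ) (h : IsCoprime c d) (z : ℂ)
    (hw : (c:ℂ)*z + (d:ℂ) ≠ 0) :
    ‖sigmaP k m c d z‖ =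
      Real.exp (-(2*Real.pi*m*z.im) / ‖(c:ℂ)*z+d‖ ^ 2)
        / ‖(c:ℂ)*z+d‖ ^ k := by
  have hbez : (c:ℝ) * (Int.gcdA c d : ℝ) + (d:ℝ) * (Int.gcdB c d : ℝ) = 1 := by
    have := Int.gcd_eq_gcd_ab c d
    rw [Int.isCoprime_iff_gcd_eq_one.mp h] at this
    exact_mod_cast congrArg (fun x : ℤ => (x : ℝ)) this.symm
  set w : ℂ := (c:ℂ)*z + d with hwdef
  have hns : Complex.normSq w ≠ 0 := by
    simpa [Complex.normSq_eq_zero] using hw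
  have hre : (2 * (Real.pi:ℂ) * Complex.I * (m : ℂ) *
      ((Int.gcdB c d : ℂ) * z - (Int.gcdA c d : ℂ)) / w).re
      = -(2*Real.pi*m*z.im) / Complex.normSq w := by
    rw [Complex.div_re, ← add_div]
    have hwre : w.re = (c:ℝ)*z.re + d := by simp [hwdef, Complex.add_re, Complex.mul_re]
    have hwim : w.im = (c:ℝ)*z.im := by simp [hwdef, Complex.add_im, Complex.mul_im]
    simp only [Complex.mul_re, Complex.mul_im, Complex.sub_re, Complex.sub_im,
      Complex.I_re, Complex.I_im, Complex.ofReal_re, Complex.ofReal_im,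
      Complex.intCast_re, Complex.intCast_im, Complex.natCast_re, Complex.natCast_im,
      Complex.re_ofNat, Complex.im_ofNat, hwre, hwim]
    congr 1
    linear_combination (-(2*Real.pi*(m:ℝ)*z.im)) * hbez
  have habs2 : Complex.normSq w = ‖w‖ ^ 2 := (Complex.sq_norm w).symm
  rw [sigmaP]
  rw [norm_div, norm_pow, Complex.norm_exp]
  rw [hre, habs2]

lemma one_le_sq_add_sq {p : ℤ × ℤ} (hp : p ≠ (0,0)) :
    (1:ℝ) ≤ (p.1:ℝ)^2 + (p.2:ℝ)^2 := by
  have h1 : (1:ℤ) ≤ p.1^2 + p.2^2 := by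
    rcases eq_or_ne p.1 0 with h | h
    · have h2 : p.2 ≠ 0 := fun h2 => hp (Prod.ext h h2)
      have := Int.one_le_abs h2
      nlinarith [sq_abs p.2, sq_nonneg p.1]
    · have := Int.one_le_abs h
      nlinarith [sq_abs p.1, sq_nonneg p.2]
  exact_mod_cast h1

lemma summable_base : Summable (fun n : ℤ => ((1:ℝ) + (n:ℝ)^2)⁻¹) := by
  have hnat : Summable (fun n : ℕ => ((1:ℝ) + (n:ℝ)^2)⁻¹) := by
    have h2 : Summable (fun n : ℕ => ((n:ℝ))⁻¹^2) := by
      simpa [one_div] using (Real.summable_one_div_nat_pow (p := 2)).mpr (by norm_num)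
    have h2' : Summable (fun n : ℕ => (((n:ℝ)+1))⁻¹^2) := by
      have := (summable_nat_add_iff (f := fun n : ℕ => ((n:ℝ))⁻¹^2) 1).mpr h2
      simpa using this
    apply (h2'.mul_left 2).of_nonneg_of_le (fun n => by positivity)
    intro n
    have hpos1 : (0:ℝ) < 1 + (n:ℝ)^2 := by positivity
    have hpos2 : (0:ℝ) < ((n:ℝ)+1)^2 := by positivity
    have h3 : ((1:ℝ) + (n:ℝ)^2)⁻¹ ≤ 2/((n:ℝ)+1)^2 := by
      rw [inv_eq_one_div, div_le_div_iff₀ hpos1 hpos2]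
      nlinarith [sq_nonneg ((n:ℝ)-1)]
    simpa [div_eq_mul_inv, inv_pow] using h3
  apply hnat.of_nat_of_neg
  simpa using hnat

lemma summable_g : Summable (fun p : ℤ×ℤ => ((((p.1:ℝ)^2 + (p.2:ℝ)^2))^2)⁻¹) := by
  have h := (summable_base.mul_of_nonneg summable_base
    (fun n => by positivity) (fun n => by positivity)).mul_left 4
  apply h.of_nonneg_of_le (fun p => by positivity)
  intro p
  rcases eq_or_ne p (0,0) with rfl | hp
  · simp
  · have h1 := one_le_sq_add_sq hp
    have hx : (0:ℝ) < (1 + (p.1:ℝ)^2) * (1 + (p.2:ℝ)^2) := by positivity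
    have hy : (0:ℝ) < ((p.1:ℝ)^2+(p.2:ℝ)^2)^2 := by positivity
    have key : ((1:ℝ) + (p.1:ℝ)^2) * ((1:ℝ) + (p.2:ℝ)^2) ≤ 4 * ((p.1:ℝ)^2+(p.2:ℝ)^2)^2 := by
      nlinarith [sq_nonneg ((p.1:ℝ)^2 - (p.2:ℝ)^2), sq_nonneg (p.1:ℝ), sq_nonneg (p.2:ℝ),
        sq_nonneg ((p.1:ℝ)*(p.2:ℝ))]
    have h5 : (((p.1:ℝ)^2+(p.2:ℝ)^2)^2)⁻¹ ≤ 4 * ((1 + (p.1:ℝ)^2) * (1 + (p.2:ℝ)^2))⁻¹ := by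
      rw [inv_eq_one_div, inv_eq_one_div, mul_one_div, div_le_div_iff₀ hy hx]
      linarith [key]
    simpa [mul_assoc, mul_comm, mul_left_comm] using h5

lemma pset_coprime {p : ℤ × ℤ} (h : p ∈ Pset) : IsCoprime p.1 p.2 := by
  rcases h with ⟨h1, _⟩ | rfl
  · exact h1
  · exact isCoprime_zero_left.mpr isUnit_one

lemma pset_ne {p : ℤ × ℤ} (h : p ∈ Pset) : p ≠ (0, 0) := by
  intro hp
  rcases h with ⟨h1, _⟩ | h2
  · rw [hp] at h1
    simpa using (isCoprime_zero_left.mp h1)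
  · rw [hp] at h2
    simp [Prod.ext_iff] at h2

lemma finite_ball (N : ℝ) : {p : ℤ × ℤ | (p.1:ℝ)^2 + (p.2:ℝ)^2 ≤ N}.Finite := by
  set B : ℤ := ⌈N⌉
  apply Set.Finite.subset ((Set.finite_Icc (-B) B).prod (Set.finite_Icc (-B) B))
  rintro ⟨a, b⟩ hp
  simp only [Set.mem_setOf_eq] at hp
  have hcb : (N : ℝ) ≤ (B : ℝ) := Int.le_ceil N
  have h1 : ((a^2 : ℤ) : ℝ) ≤ (B : ℝ) := by push_cast; nlinarith [sq_nonneg (b:ℝ)]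
  have h2 : ((b^2 : ℤ) : ℝ) ≤ (B : ℝ) := by push_cast; nlinarith [sq_nonneg (a:ℝ)]
  have h1' : a^2 ≤ B := by exact_mod_cast h1
  have h2' : b^2 ≤ B := by exact_mod_cast h2
  have ha : |a| ≤ B := le_trans (by nlinarith [sq_abs a, abs_nonneg a]) h1'
  have hb : |b| ≤ B := le_trans (by nlinarith [sq_abs b, abs_nonneg b]) h2'
  exact ⟨Set.mem_Icc.mpr ⟨neg_le_of_abs_le ha, le_of_abs_le ha⟩,
    Set.mem_Icc.mpr ⟨neg_le_of_abs_le hb, le_of_abs_le hb⟩⟩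

lemma rP_pos {α : ℝ} {c d : ℤ} {z : ℂ} (hA : 0 < ‖(c:ℂ)*z + d‖) :
    0 < rP α c d z := div_pos (Real.exp_pos _) hA

lemma rP_le_inv {α : ℝ} (hα : 0 < α) {c d : ℤ} {z : ℂ} (hz : 0 < z.im)
    (hA : 0 < ‖(c:ℂ)*z + d‖) :
    rP α c d z ≤ (‖(c:ℂ)*z + d‖)⁻¹ := by
  have ht : Real.exp (-2 * Real.pi * α * z.im / ‖(c:ℂ)*z + d‖ ^ 2) ≤ 1 := by
    rw [Real.exp_le_one_iff]
    apply div_nonpos_of_nonpos_of_nonneg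
    · have h0 : 0 < 2 * Real.pi * α * z.im := by positivity
      linarith
    · positivity
  rw [rP, ← one_div]
  exact div_le_div₀ zero_le_one ht hA le_rfl

lemma rP_continuousOn (α : ℝ) (c d : ℤ) (S : Set ℂ)
    (hA : ∀ z ∈ S, ‖(c:ℂ)*z + d‖ ≠ 0) : ContinuousOn (rP α c d) S := by
  have habs : Continuous fun z : ℂ => ‖(c:ℂ)*z + d‖ :=
    continuous_norm.comp (by continuity)
  apply ContinuousOn.div _ habs.continuousOn hA
  apply Real.continuous_exp.comp_continuousOn
  apply ContinuousOn.div
  · exact (continuous_const.mul Complex.continuous_im).continuousOn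
  · exact (habs.pow 2).continuousOn
  · exact fun z hz => pow_ne_zero 2 (hA z hz)

lemma sigma_eq_r (k m : ℕ) (c d : ℤ) (h : IsCoprime c d) (α : ℝ) (z : ℂ)
    (hA : 0 < ‖(c:ℂ)*z + d‖) :
    ‖sigmaP k m c d z‖ = rP α c d z ^ k *
      Real.exp ((α*k - m) * (2*Real.pi*z.im / ‖(c:ℂ)*z+d‖ ^ 2)) := by
  have hw : (c:ℂ)*z + (d:ℂ) ≠ 0 := by
    intro h0
    rw [h0] at hA
    simp at hA
  have hA2 : (‖(c:ℂ)*z+d‖ : ℝ) ^ 2 ≠ 0 := by positivity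
  rw [sigma_abs k m c d h z hw, rP, div_pow, ← Real.exp_nat_mul,
    div_mul_eq_mul_div, ← Real.exp_add]
  congr 1
  field_simp
  ring

lemma pos_of_sq_pos {a : ℝ} (ha : 0 ≤ a) (h : 0 < a ^ 2) : 0 < a := by
  rcases ha.lt_or_eq with h1 | h1
  · exact h1
  · exfalso; rw [← h1] at h; simp at h

lemma aux_id (q rm D gp r₀ : ℝ) (a : ℕ) (hD : D ≠ 0) (hr : r₀ ≠ 0) :
    q^a*rm^a*((D^2)⁻¹*gp) * ((r₀^4)⁻¹*rm^4)
      = q^a*(((D*r₀^2)^2)⁻¹*gp)*(rm^a*rm^4) := by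
  field_simp

/-- main lemma: if `r_{c_m,d_m} > r_{c,d}` on a nonempty compact `C ⊆ ℱ` for
all `(c,d) ∈ I`, then `sup_{z∈C} (Σ_{(c,d)∈I} |σ⁽ⁿ⁾_{c,d}(z)|)/|σ⁽ⁿ⁾_{c_m,d_m}(z)| → 0`,
i.e. for every `ε > 0`, eventually `Σ_{I} |σ⁽ⁿ⁾_{c,d}(z)| ≤ ε·|σ⁽ⁿ⁾_{c_m,d_m}(z)| on `C`. -/
theorem main_lemma (α : ℝ) (hα : 0 < α)
    (k m : ℕ → ℕ) (hke : ∀ n, Even (k n)) (hk4 : ∀ n, 4 ≤ k n)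
    (hki : Tendsto k atTop atTop)
    (hm : Tendsto (fun n => (m n : ℝ) / (k n : ℝ)) atTop (nhds α))
    (C : Set ℂ) (hCF : C ⊆ Fdom) (hCne : C.Nonempty) (hCc : IsCompact C)
    (I : Set (ℤ × ℤ)) (hI : I ⊆ Pset)
    (cm dm : ℤ) (hcm : (cm, dm) ∈ Pset \ I)
    (hr : ∀ p ∈ I, ∀ z ∈ C, rP α p.1 p.2 z < rP α cm dm z) :
    ∀ ε : ℝ, 0 < ε → ∀ᶠ n in atTop, ∀ z ∈ C,
      (∑' p : I, ‖sigmaP (k n) (m n) p.1.1 p.1.2 z‖) ≤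
        ε * ‖sigmaP (k n) (m n) cm dm z‖ := by
  classical
  intro ε hε
  obtain ⟨z₀, hz₀C, hz₀min⟩ := hCc.exists_isMinOn hCne Complex.continuous_im.continuousOn
  obtain ⟨z₁, hz₁C, hz₁max⟩ := hCc.exists_isMaxOn hCne Complex.continuous_im.continuousOn
  obtain ⟨z₂, hz₂C, hz₂max⟩ := hCc.exists_isMaxOn hCne continuous_norm.continuousOn
  have him : ∀ z ∈ C, 0 < z.im := fun z hz => (hCF hz).1
  set y₀ := z₀.im with hy₀def
  set y₁ := z₁.im with hy₁def
  set R := ‖z₂‖ with hRdef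
  have hy₀ : 0 < y₀ := him z₀ hz₀C
  have hy₁ : 0 < y₁ := him z₁ hz₁C
  have hylb : ∀ z ∈ C, y₀ ≤ z.im := fun z hz => hz₀min hz
  have hyub : ∀ z ∈ C, z.im ≤ y₁ := fun z hz => hz₁max hz
  have hRub : ∀ z ∈ C, ‖z‖ ≤ R := fun z hz => hz₂max hz
  have hR0 : (0:ℝ) ≤ R := norm_nonneg _
  have hRpos : (0:ℝ) < R^2 + 1 := by positivity
  set D := y₀^2 / (R^2+1) with hDdef
  have hD : 0 < D := div_pos (pow_pos hy₀ 2) hRpos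
  -- the fundamental quadratic lower bound on C
  have hKey : ∀ z ∈ C, ∀ c d : ℤ, D * ((c:ℝ)^2+(d:ℝ)^2) ≤ (‖(c:ℂ)*z+d‖)^2 := by
    intro z hz c d
    have h1 := quad_lb z c d
    have h2 : y₀ ≤ z.im := hylb z hz
    have h3 : ‖z‖ ≤ R := hRub z hz
    have h4 : (0:ℝ) ≤ ‖z‖ := norm_nonneg _
    have h5 : (0:ℝ) ≤ (‖(c:ℂ)*z+d‖)^2 := sq_nonneg _
    rw [hDdef, div_mul_eq_mul_div, div_le_iff₀ hRpos]
    have h6 : ((c:ℝ)^2+(d:ℝ)^2) * y₀^2 ≤ ((c:ℝ)^2+(d:ℝ)^2) * z.im^2 :=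
      mul_le_mul_of_nonneg_left (pow_le_pow_left₀ hy₀.le h2 2) (by positivity)
    have h7 : (‖z‖)^2 ≤ R^2 := pow_le_pow_left₀ h4 h3 2
    have h8 : (‖(c:ℂ)*z+d‖)^2 * (‖z‖^2 + 1) ≤
        (‖(c:ℂ)*z+d‖)^2 * (R^2 + 1) :=
      mul_le_mul_of_nonneg_left (by linarith only [h7]) h5
    linarith only [h1, h6, h8]
  have hcmP : (cm, dm) ∈ Pset := hcm.1
  have hcmco : IsCoprime cm dm := pset_coprime hcmP
  have hcm1 : (1:ℝ) ≤ (cm:ℝ)^2 + (dm:ℝ)^2 := one_le_sq_add_sq (pset_ne hcmP)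
  have hAmD : ∀ z ∈ C, D ≤ (‖(cm:ℂ)*z+dm‖)^2 := by
    intro z hz
    calc D = D * 1 := (mul_one D).symm
      _ ≤ D * ((cm:ℝ)^2+(dm:ℝ)^2) := mul_le_mul_of_nonneg_left hcm1 hD.le
      _ ≤ _ := hKey z hz cm dm
  have hAmpos : ∀ z ∈ C, 0 < ‖(cm:ℂ)*z+dm‖ := fun z hz =>
    pos_of_sq_pos (norm_nonneg _) (lt_of_lt_of_le hD (hAmD z hz))
  have hApos : ∀ p : ℤ×ℤ, p ∈ Pset → ∀ z ∈ C, 0 < ‖(p.1:ℂ)*z+p.2‖ := by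
    intro p hp z hz
    have h1 : (1:ℝ) ≤ (p.1:ℝ)^2+(p.2:ℝ)^2 := one_le_sq_add_sq (pset_ne hp)
    have h2 := hKey z hz p.1 p.2
    have h3 : 0 < D * ((p.1:ℝ)^2+(p.2:ℝ)^2) := mul_pos hD (lt_of_lt_of_le one_pos h1)
    exact pos_of_sq_pos (norm_nonneg _) (lt_of_lt_of_le h3 h2)
  set A₁ := |(cm:ℝ)| * R + |(dm:ℝ)| + 1 with hA₁def
  have hA₁pos : 0 < A₁ := by
    have h1 : (0:ℝ) ≤ |(cm:ℝ)| *R := mul_nonneg (abs_nonneg _) hR0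
    have h2 : (0:ℝ) ≤ |(dm:ℝ)| := abs_nonneg _
    rw [hA₁def]
    linarith only [h1, h2]
  have hAmub : ∀ z ∈ C, ‖(cm:ℂ)*z+dm‖ ≤ A₁ := by
    intro z hz
    calc ‖(cm:ℂ)*z+dm‖ ≤ ‖(cm:ℂ)*z‖ + ‖(dm:ℂ)‖ :=
          norm_add_le _ _
      _ = |(cm:ℝ)| * ‖z‖ + |(dm:ℝ)| := by
          rw [norm_mul, Complex.norm_intCast, Complex.norm_intCast]
      _ ≤ A₁ := by
          have h1 : |(cm:ℝ)| * ‖z‖ ≤ |(cm:ℝ)| * R :=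
            mul_le_mul_of_nonneg_left (hRub z hz) (abs_nonneg _)
          rw [hA₁def]
          linarith only [h1]
  set r₀ := Real.exp (-2*Real.pi*α*y₁/D) / A₁ with hr₀def
  have hr₀pos : 0 < r₀ := div_pos (Real.exp_pos _) hA₁pos
  have hrmlb : ∀ z ∈ C, r₀ ≤ rP α cm dm z := by
    intro z hz
    have hAm2 : (0:ℝ) < (‖(cm:ℂ)*z+dm‖)^2 := pow_pos (hAmpos z hz) 2
    rw [rP, hr₀def]
    apply div_le_div₀ (Real.exp_pos _).le _ (hAmpos z hz) (hAmub z hz)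
    rw [Real.exp_le_exp, div_le_div_iff₀ hD hAm2]
    have e : (2*Real.pi*α*z.im) * D ≤ (2*Real.pi*α*y₁) * (‖(cm:ℂ)*z+dm‖)^2 := by
      apply mul_le_mul _ (hAmD z hz) hD.le
      · exact mul_nonneg (mul_nonneg (by positivity) hα.le) hy₁.le
      · linarith only [mul_nonneg (mul_pos Real.pi_pos hα).le
          (sub_nonneg.mpr (hyub z hz))]
    linarith only [e]
  have hrmpos : ∀ z ∈ C, 0 < rP α cm dm z := fun z hz => lt_of_lt_of_le hr₀pos (hrmlb z hz)
  -- the uniform gap q < 1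
  set N := 4 / (D * r₀^2) with hNdef
  set S := {p ∈ I | (p.1:ℝ)^2 + (p.2:ℝ)^2 ≤ N} with hSdef
  have hSfin : S.Finite := (finite_ball N).subset (fun p hp => hp.2)
  have hex : ∀ p : ℤ×ℤ, p ∈ S →
      ∃ qq : ℝ, qq < 1 ∧ ∀ z ∈ C, rP α p.1 p.2 z ≤ qq * rP α cm dm z := by
    intro p hp
    have hpI : p ∈ I := hp.1
    have hpP : p ∈ Pset := hI hpI
    have hApos' : ∀ z ∈ C, ‖(p.1:ℂ)*z+p.2‖ ≠ 0 :=
      fun z hz => ne_of_gt (hApos p hpP z hz)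
    have hcont : ContinuousOn (fun z => rP α p.1 p.2 z / rP α cm dm z) C :=
      (rP_continuousOn α p.1 p.2 C hApos').div
        (rP_continuousOn α cm dm C (fun z hz => ne_of_gt (hAmpos z hz)))
        (fun z hz => ne_of_gt (hrmpos z hz))
    obtain ⟨zp, hzpC, hzpmax⟩ := hCc.exists_isMaxOn hCne hcont
    refine ⟨rP α p.1 p.2 zp / rP α cm dm zp, ?_, ?_⟩
    · rw [div_lt_one (hrmpos zp hzpC)]; exact hr p hpI zp hzpC
    · intro z hz
      have h1 : rP α p.1 p.2 z / rP α cm dm z ≤ rP α p.1 p.2 zp / rP α cm dm zp := hzpmax hz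
      have hrmz : 0 < rP α cm dm z := hrmpos z hz
      calc rP α p.1 p.2 z = (rP α p.1 p.2 z / rP α cm dm z) * rP α cm dm z :=
            (div_mul_cancel₀ _ (ne_of_gt hrmz)).symm
        _ ≤ _ := mul_le_mul_of_nonneg_right h1 hrmz.le
  choose! qf hqf1 hqf2 using hex
  set T : Finset ℝ := insert (1/2 : ℝ) (hSfin.toFinset.image qf) with hTdef
  have hTne : (1/2:ℝ) ∈ T := Finset.mem_insert_self _ _
  set q := T.max' ⟨1/2, hTne⟩ with hqdef
  have hq2 : (1/2:ℝ) ≤ q := Finset.le_max' T _ hTne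
  have hq0 : 0 < q := lt_of_lt_of_le (by norm_num) hq2
  have hq1 : q < 1 := by
    rw [hqdef]
    refine (Finset.max'_lt_iff T ⟨1/2, hTne⟩).mpr ?_
    intro b hb
    rcases Finset.mem_insert.mp hb with rfl | hb'
    · norm_num
    · obtain ⟨p, hpS, rfl⟩ := Finset.mem_image.mp hb'
      exact hqf1 p (hSfin.mem_toFinset.mp hpS)
  have hgap : ∀ p ∈ I, ∀ z ∈ C, rP α p.1 p.2 z ≤ q * rP α cm dm z := by
    intro p hpI z hz
    have hrmz : 0 < rP α cm dm z := hrmpos z hz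
    by_cases hpS : p ∈ S
    · refine le_trans (hqf2 p hpS z hz) (mul_le_mul_of_nonneg_right ?_ hrmz.le)
      exact Finset.le_max' T _
        (Finset.mem_insert_of_mem (Finset.mem_image_of_mem qf (hSfin.mem_toFinset.mpr hpS)))
    · have hN : N < (p.1:ℝ)^2 + (p.2:ℝ)^2 := by
        by_contra hcon
        push_neg at hcon
        exact hpS ⟨hpI, hcon⟩
      have hAp : 0 < ‖(p.1:ℂ)*z+p.2‖ := hApos p (hI hpI) z hz
      have hA2 : (2/r₀)^2 < (‖(p.1:ℂ)*z+p.2‖)^2 := by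
        have h2 := hKey z hz p.1 p.2
        have h3 : D * N < D * ((p.1:ℝ)^2+(p.2:ℝ)^2) := mul_lt_mul_of_pos_left hN hD
        have hDN : D * N = 4/r₀^2 := by
          rw [hNdef, ← mul_div_assoc, mul_div_mul_left _ _ (ne_of_gt hD)]
        calc (2/r₀)^2 = 4/r₀^2 := by rw [div_pow]; norm_num
          _ = D*N := hDN.symm
          _ < D*((p.1:ℝ)^2+(p.2:ℝ)^2) := h3
          _ ≤ _ := h2
      have hA : 2/r₀ < ‖(p.1:ℂ)*z+p.2‖ :=
        lt_of_pow_lt_pow_left₀ 2 hAp.le hA2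
      have h3 : rP α p.1 p.2 z ≤ (‖(p.1:ℂ)*z+p.2‖)⁻¹ :=
        rP_le_inv hα (him z hz) hAp
      have h4 : (‖(p.1:ℂ)*z+p.2‖)⁻¹ < r₀/2 := by
        have h2r : (0:ℝ) < 2/r₀ := div_pos (by norm_num) hr₀pos
        calc (‖(p.1:ℂ)*z+p.2‖)⁻¹ < (2/r₀)⁻¹ := inv_strictAnti₀ h2r hA
          _ = r₀/2 := by rw [inv_div]
      have h5 : r₀ ≤ rP α cm dm z := hrmlb z hz
      have h6 : (1/2:ℝ)*rP α cm dm z ≤ q*rP α cm dm z :=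
        mul_le_mul_of_nonneg_right hq2 hrmz.le
      linarith only [h3, h4, h5, h6]
  -- constants for the final estimate
  set q' := (1+q)/2 with hq'def
  have hq'0 : 0 < q' := by rw [hq'def]; linarith only [hq0]
  have hq'1 : q' < 1 := by rw [hq'def]; linarith only [hq1]
  set c₀ := 4*Real.pi*y₁/D with hc₀def
  have hc₀ : 0 < c₀ := div_pos (mul_pos (by positivity) hy₁) hD
  set η := min 1 (Real.log (q'/q) / c₀) with hηdef
  have hlogpos : 0 < Real.log (q'/q) := by
    apply Real.log_pos
    rw [lt_div_iff₀ hq0, one_mul, hq'def]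
    linarith only [hq1]
  have hη0 : 0 < η := lt_min one_pos (div_pos hlogpos hc₀)
  have hη1 : η ≤ 1 := min_le_left _ _
  have hqE : q * Real.exp (c₀*η) ≤ q' := by
    have h1 : c₀ * η ≤ Real.log (q'/q) := by
      calc c₀ * η ≤ c₀ * (Real.log (q'/q)/c₀) :=
            mul_le_mul_of_nonneg_left (min_le_right _ _) hc₀.le
        _ = Real.log (q'/q) := by
            rw [mul_comm, div_mul_cancel₀ _ (ne_of_gt hc₀)]
    calc q * Real.exp (c₀*η) ≤ q * Real.exp (Real.log (q'/q)) :=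
          mul_le_mul_of_nonneg_left (Real.exp_le_exp.mpr h1) hq0.le
      _ = q * (q'/q) := by rw [Real.exp_log (div_pos hq'0 hq0)]
      _ = q' := by rw [mul_comm, div_mul_cancel₀ _ (ne_of_gt hq0)]
  set Stot := ∑' p : ℤ×ℤ, ((((p.1:ℝ)^2 + (p.2:ℝ)^2))^2)⁻¹ with hStotdef
  have hStot0 : 0 ≤ Stot := tsum_nonneg (fun p => by positivity)
  set K' := Real.exp (4*c₀) * (((D*r₀^2)^2)⁻¹ * Stot) with hK'def
  have hK'0 : 0 ≤ K' :=
    mul_nonneg (Real.exp_pos _).le (mul_nonneg (inv_nonneg.mpr (by positivity)) hStot0)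
  have hK'1 : (0:ℝ) < K' + 1 := by linarith only [hK'0]
  obtain ⟨J, hJ⟩ : ∃ J : ℕ, q'^J * (K'+1) ≤ ε := by
    have h1 : Tendsto (fun j : ℕ => q'^j) atTop (nhds 0) :=
      tendsto_pow_atTop_nhds_zero_of_lt_one hq'0.le hq'1
    have h2 : ∀ᶠ j in atTop, q'^j < ε/(K'+1) :=
      h1.eventually (gt_mem_nhds (div_pos hε hK'1))
    obtain ⟨J, hJ⟩ := h2.exists
    exact ⟨J, (le_div_iff₀ hK'1).mp hJ.le⟩
  have hev1 : ∀ᶠ n in atTop, J + 4 ≤ k n := hki.eventually_ge_atTop (J+4)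
  have hev2 : ∀ᶠ n in atTop, |((m n:ℝ))/(k n:ℝ) - α| < η := by
    have h := Metric.tendsto_nhds.mp hm η hη0
    filter_upwards [h] with n hn
    rw [← Real.dist_eq]
    exact hn
  filter_upwards [hev1, hev2] with n hn1 hn2
  intro z hz
  have hk4n : 4 ≤ k n := hk4 n
  have hkpos : (0:ℝ) < (k n : ℝ) := by
    have h : (0:ℕ) < k n := by omega
    exact_mod_cast h
  have hMη : |α * (k n:ℝ) - (m n:ℝ)| ≤ η * (k n:ℝ) := by
    have h1 : |(m n:ℝ)/(k n:ℝ) - α| ≤ η := hn2.le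
    have h2 : α*(k n:ℝ) - (m n:ℝ) = -(((m n:ℝ)/(k n:ℝ) - α) * (k n:ℝ)) := by
      rw [sub_mul, div_mul_cancel₀ _ (ne_of_gt hkpos)]
      ring
    rw [h2, abs_neg, abs_mul, abs_of_pos hkpos]
    exact mul_le_mul_of_nonneg_right h1 hkpos.le
  have hzim : 0 < z.im := him z hz
  have hAmz : 0 < ‖(cm:ℂ)*z+dm‖ := hAmpos z hz
  have hrm : 0 < rP α cm dm z := hrmpos z hz
  have hrm4 : r₀^4 ≤ (rP α cm dm z)^4 := pow_le_pow_left₀ hr₀pos.le (hrmlb z hz) 4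
  have hsig_m := sigma_eq_r (k n) (m n) cm dm hcmco α z hAmz
  have hsigm_pos : 0 < ‖sigmaP (k n) (m n) cm dm z‖ := by
    rw [hsig_m]
    exact mul_pos (pow_pos hrm _) (Real.exp_pos _)
  have hsplit : ∀ x : ℝ, x^(k n) = x^(k n - 4) * x^4 := fun x => by
    rw [← pow_add, Nat.sub_add_cancel hk4n]
  -- pointwise core bound
  have hcore : ∀ p : ℤ×ℤ, p ∈ I →
      ‖sigmaP (k n) (m n) p.1 p.2 z‖ ≤
        (q'^(k n - 4) * (Real.exp (4*c₀) *
          (((D*r₀^2)^2)⁻¹ * ((((p.1:ℝ)^2+(p.2:ℝ)^2))^2)⁻¹))) *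
          ‖sigmaP (k n) (m n) cm dm z‖ := by
    intro p hpI
    have hpP := hI hpI
    have hpco := pset_coprime hpP
    have hp1 : (1:ℝ) ≤ (p.1:ℝ)^2+(p.2:ℝ)^2 := one_le_sq_add_sq (pset_ne hpP)
    have hAz : 0 < ‖(p.1:ℂ)*z+p.2‖ := hApos p hpP z hz
    have hKeyp := hKey z hz p.1 p.2
    have hDA : D ≤ (‖(p.1:ℂ)*z+p.2‖)^2 := by
      calc D = D * 1 := (mul_one D).symm
        _ ≤ D * ((p.1:ℝ)^2+(p.2:ℝ)^2) := mul_le_mul_of_nonneg_left hp1 hD.le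
        _ ≤ _ := hKeyp
    have hsig_p := sigma_eq_r (k n) (m n) p.1 p.2 hpco α z hAz
    set A := ‖(p.1:ℂ)*z+p.2‖ with hAdef
    set Am := ‖(cm:ℂ)*z+dm‖ with hAmdef
    set rp := rP α p.1 p.2 z with hrpdef
    set rm := rP α cm dm z with hrmdef
    set β := α*(k n:ℝ) - (m n:ℝ) with hβdef
    set gp := ((((p.1:ℝ)^2+(p.2:ℝ)^2))^2)⁻¹ with hgpdef
    have hA2 : (0:ℝ) < A^2 := pow_pos hAz 2
    have hAm2 : (0:ℝ) < Am^2 := pow_pos hAmz 2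
    have h2pi : (0:ℝ) ≤ 2*Real.pi := by positivity
    have htA : 2*Real.pi*z.im/A^2 ≤ c₀/2 := by
      calc 2*Real.pi*z.im/A^2 ≤ 2*Real.pi*y₁/D := by
            apply div_le_div₀ (mul_nonneg h2pi hy₁.le) _ hD hDA
            linarith only [mul_nonneg Real.pi_pos.le (sub_nonneg.mpr (hyub z hz))]
        _ = c₀/2 := by rw [hc₀def]; ring
    have htAm : 2*Real.pi*z.im/Am^2 ≤ c₀/2 := by
      calc 2*Real.pi*z.im/Am^2 ≤ 2*Real.pi*y₁/D := by
            apply div_le_div₀ (mul_nonneg h2pi hy₁.le) _ hD (hAmD z hz)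
            linarith only [mul_nonneg Real.pi_pos.le (sub_nonneg.mpr (hyub z hz))]
        _ = c₀/2 := by rw [hc₀def]; ring
    have htA0 : (0:ℝ) ≤ 2*Real.pi*z.im/A^2 :=
      div_nonneg (mul_nonneg h2pi hzim.le) hA2.le
    have htAm0 : (0:ℝ) ≤ 2*Real.pi*z.im/Am^2 :=
      div_nonneg (mul_nonneg h2pi hzim.le) hAm2.le
    have hup : β * (2*Real.pi*z.im/A^2) ≤ β * (2*Real.pi*z.im/Am^2) + c₀*η*(k n:ℝ) := by
      have h1 : β*(2*Real.pi*z.im/A^2) - β*(2*Real.pi*z.im/Am^2) ≤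
          |β| * |(2*Real.pi*z.im/A^2) - (2*Real.pi*z.im/Am^2)| := by
        calc β*(2*Real.pi*z.im/A^2) - β*(2*Real.pi*z.im/Am^2)
            = β*((2*Real.pi*z.im/A^2) - (2*Real.pi*z.im/Am^2)) := by ring
          _ ≤ |β*((2*Real.pi*z.im/A^2) - (2*Real.pi*z.im/Am^2))| := le_abs_self _
          _ = |β| * |(2*Real.pi*z.im/A^2) - (2*Real.pi*z.im/Am^2)| := abs_mul _ _
      have h2 : |(2*Real.pi*z.im/A^2) - (2*Real.pi*z.im/Am^2)| ≤ c₀ := by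
        rw [abs_le]
        constructor
        · linarith only [htA0, htAm, hc₀]
        · linarith only [htA, htAm0, hc₀]
      have h4 : |β| * |(2*Real.pi*z.im/A^2) - (2*Real.pi*z.im/Am^2)| ≤ (η*(k n:ℝ))*c₀ :=
        mul_le_mul hMη h2 (abs_nonneg _) (mul_nonneg hη0.le hkpos.le)
      linarith only [h1, h4]
    have hExp : Real.exp (β*(2*Real.pi*z.im/A^2)) ≤
        Real.exp (β*(2*Real.pi*z.im/Am^2)) * Real.exp (c₀*η) ^ (k n) := by
      rw [← Real.exp_nat_mul, ← Real.exp_add]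
      apply Real.exp_le_exp.mpr
      have he : (k n:ℝ)*(c₀*η) = c₀*η*(k n:ℝ) := by ring
      linarith only [hup, he]
    have hrp0 : 0 < rp := rP_pos hAz
    have hgapp : rp ≤ q*rm := hgap p hpI z hz
    have hrp4 : rp^4 ≤ (D^2)⁻¹ * gp := by
      have h1 : rp ≤ A⁻¹ := rP_le_inv hα hzim hAz
      have h2 : rp^4 ≤ (A⁻¹)^4 := pow_le_pow_left₀ hrp0.le h1 4
      have h3 : (A⁻¹)^4 = ((A^2)^2)⁻¹ := by rw [inv_pow]; ring
      have h5 : (0:ℝ) < D*((p.1:ℝ)^2+(p.2:ℝ)^2) := mul_pos hD (lt_of_lt_of_le one_pos hp1)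
      have h6 : ((A^2)^2)⁻¹ ≤ ((D*((p.1:ℝ)^2+(p.2:ℝ)^2))^2)⁻¹ :=
        inv_anti₀ (pow_pos h5 2) (pow_le_pow_left₀ h5.le hKeyp 2)
      have h7 : ((D*((p.1:ℝ)^2+(p.2:ℝ)^2))^2)⁻¹ = (D^2)⁻¹ * gp := by
        rw [hgpdef, mul_pow, mul_inv]
      calc rp^4 ≤ (A⁻¹)^4 := h2
        _ = ((A^2)^2)⁻¹ := h3
        _ ≤ ((D*((p.1:ℝ)^2+(p.2:ℝ)^2))^2)⁻¹ := h6
        _ = (D^2)⁻¹ * gp := h7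
    have hgp0 : (0:ℝ) ≤ gp := by rw [hgpdef]; positivity
    have hDgp : (0:ℝ) ≤ (D^2)⁻¹*gp := mul_nonneg (inv_nonneg.mpr (sq_nonneg D)) hgp0
    have hDr : (0:ℝ) ≤ ((D*r₀^2)^2)⁻¹*gp := mul_nonneg (inv_nonneg.mpr (sq_nonneg _)) hgp0
    have hrK : rp^(k n) ≤ q^(k n - 4) * (((D*r₀^2)^2)⁻¹ * gp) * rm^(k n) := by
      rw [hsplit rp, hsplit rm]
      have s1 : rp^(k n - 4) ≤ (q*rm)^(k n - 4) := pow_le_pow_left₀ hrp0.le hgapp _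
      have s2 : rp^(k n - 4)*rp^4 ≤ (q*rm)^(k n - 4) * ((D^2)⁻¹*gp) :=
        mul_le_mul s1 hrp4 (pow_nonneg hrp0.le 4)
          (pow_nonneg (mul_nonneg hq0.le hrm.le) _)
      have s3 : (q*rm)^(k n - 4)*((D^2)⁻¹*gp) ≤
          q^(k n - 4)*(((D*r₀^2)^2)⁻¹*gp)*(rm^(k n - 4)*rm^4) := by
        rw [mul_pow]
        have hF : (0:ℝ) ≤ q^(k n - 4)*rm^(k n - 4)*((D^2)⁻¹*gp) :=
          mul_nonneg (mul_nonneg (pow_nonneg hq0.le _) (pow_nonneg hrm.le _)) hDgp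
        have h1 : (1:ℝ) ≤ (r₀^4)⁻¹ * rm^4 := by
          rw [inv_mul_eq_div, le_div_iff₀ (pow_pos hr₀pos 4)]
          linarith only [hrm4]
        calc q^(k n - 4)*rm^(k n - 4)*((D^2)⁻¹*gp)
            ≤ (q^(k n - 4)*rm^(k n - 4)*((D^2)⁻¹*gp)) * ((r₀^4)⁻¹*rm^4) :=
              le_mul_of_one_le_right hF h1
          _ = q^(k n - 4)*(((D*r₀^2)^2)⁻¹*gp)*(rm^(k n - 4)*rm^4) :=
              aux_id q rm D gp r₀ (k n - 4) (ne_of_gt hD) (ne_of_gt hr₀pos)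
      exact le_trans s2 s3
    rw [hsig_p, hsig_m]
    have hcoefnn : (0:ℝ) ≤ q^(k n - 4) * (((D*r₀^2)^2)⁻¹ * gp) * rm^(k n) :=
      mul_nonneg (mul_nonneg (pow_nonneg hq0.le _) hDr) (pow_nonneg hrm.le _)
    have hstep : rp^(k n) * Real.exp (β*(2*Real.pi*z.im/A^2)) ≤
        (q^(k n - 4) * (((D*r₀^2)^2)⁻¹ * gp) * rm^(k n)) *
          (Real.exp (β*(2*Real.pi*z.im/Am^2)) * Real.exp (c₀*η) ^ (k n)) :=
      mul_le_mul hrK hExp (Real.exp_pos _).le hcoefnn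
    have hqpow : q^(k n - 4) * Real.exp (c₀*η) ^ (k n) ≤
        q'^(k n - 4) * Real.exp (4*c₀) := by
      rw [hsplit (Real.exp (c₀*η))]
      calc q^(k n - 4) * (Real.exp (c₀*η)^(k n - 4) * Real.exp (c₀*η)^4)
          = (q*Real.exp (c₀*η))^(k n - 4) * Real.exp (c₀*η)^4 := by
            rw [mul_pow]; ring
        _ ≤ q'^(k n - 4) * Real.exp (4*c₀) := by
            apply mul_le_mul (pow_le_pow_left₀ (mul_nonneg hq0.le (Real.exp_pos _).le) hqE _)
              _ (by positivity) (pow_nonneg hq'0.le _)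
            rw [← Real.exp_nat_mul]
            apply Real.exp_le_exp.mpr
            push_cast
            linarith only [mul_nonneg hc₀.le (sub_nonneg.mpr hη1)]
    calc rp^(k n) * Real.exp (β*(2*Real.pi*z.im/A^2))
        ≤ (q^(k n - 4) * (((D*r₀^2)^2)⁻¹ * gp) * rm^(k n)) *
          (Real.exp (β*(2*Real.pi*z.im/Am^2)) * Real.exp (c₀*η) ^ (k n)) := hstep
      _ = (q^(k n - 4) * Real.exp (c₀*η) ^ (k n)) * (((D*r₀^2)^2)⁻¹ * gp) *
          (rm^(k n) * Real.exp (β*(2*Real.pi*z.im/Am^2))) := by ring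
      _ ≤ (q'^(k n - 4) * Real.exp (4*c₀)) * (((D*r₀^2)^2)⁻¹ * gp) *
          (rm^(k n) * Real.exp (β*(2*Real.pi*z.im/Am^2))) := by
          apply mul_le_mul_of_nonneg_right (mul_le_mul_of_nonneg_right hqpow hDr)
          exact mul_nonneg (pow_nonneg hrm.le _) (Real.exp_pos _).le
      _ = (q'^(k n - 4) * (Real.exp (4*c₀) * (((D*r₀^2)^2)⁻¹ * gp))) *
          (rm^(k n) * Real.exp (β*(2*Real.pi*z.im/Am^2))) := by ring
  -- summing up
  apply tsum_le_of_sum_le' (mul_nonneg hε.le (norm_nonneg _))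
  intro s
  have hga : ∀ p : ℤ×ℤ, (0:ℝ) ≤ ((((p.1:ℝ)^2+(p.2:ℝ)^2))^2)⁻¹ := fun p => by positivity
  have hsumI : Summable (fun p : ↥I => ((((p.1.1:ℝ)^2 + (p.1.2:ℝ)^2))^2)⁻¹) :=
    summable_g.subtype I
  have hsles : ∑ p ∈ s, ((((p.1.1:ℝ)^2+(p.1.2:ℝ)^2))^2)⁻¹ ≤ Stot := by
    calc ∑ p ∈ s, ((((p.1.1:ℝ)^2+(p.1.2:ℝ)^2))^2)⁻¹
        ≤ ∑' p : ↥I, ((((p.1.1:ℝ)^2+(p.1.2:ℝ)^2))^2)⁻¹ :=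
          Summable.sum_le_tsum s (fun i _ => hga i.1) hsumI
      _ ≤ Stot := Summable.tsum_le_tsum_of_inj (fun p : ↥I => (p:ℤ×ℤ)) Subtype.val_injective
          (fun x _ => hga x) (fun i => le_rfl) hsumI summable_g
  calc (∑ p ∈ s, ‖sigmaP (k n) (m n) p.1.1 p.1.2 z‖)
      ≤ ∑ p ∈ s, (q'^(k n - 4) * (Real.exp (4*c₀) *
          (((D*r₀^2)^2)⁻¹ * ((((p.1.1:ℝ)^2+(p.1.2:ℝ)^2))^2)⁻¹))) *
          ‖sigmaP (k n) (m n) cm dm z‖ :=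
        Finset.sum_le_sum (fun p _ => hcore p.1 p.2)
    _ = (q'^(k n - 4) * Real.exp (4*c₀) * ((D*r₀^2)^2)⁻¹ *
          ∑ p ∈ s, ((((p.1.1:ℝ)^2+(p.1.2:ℝ)^2))^2)⁻¹) *
          ‖sigmaP (k n) (m n) cm dm z‖ := by
        rw [← Finset.sum_mul]
        congr 1
        rw [Finset.mul_sum]
        apply Finset.sum_congr rfl
        intro p _
        ring
    _ ≤ (q'^(k n - 4) * Real.exp (4*c₀) * ((D*r₀^2)^2)⁻¹ * Stot) *
          ‖sigmaP (k n) (m n) cm dm z‖ := by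
        apply mul_le_mul_of_nonneg_right _ hsigm_pos.le
        apply mul_le_mul_of_nonneg_left hsles
        exact mul_nonneg (mul_nonneg (pow_nonneg hq'0.le _) (Real.exp_pos _).le)
          (inv_nonneg.mpr (by positivity))
    _ ≤ ε * ‖sigmaP (k n) (m n) cm dm z‖ := by
        apply mul_le_mul_of_nonneg_right _ hsigm_pos.le
        have h1 : q'^(k n - 4) ≤ q'^J :=
          pow_le_pow_of_le_one hq'0.le hq'1.le (by omega)
        have h2 : Real.exp (4*c₀) * ((D*r₀^2)^2)⁻¹ * Stot = K' := by
          rw [hK'def]; ring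
        calc q'^(k n - 4) * Real.exp (4*c₀) * ((D*r₀^2)^2)⁻¹ * Stot
            = q'^(k n - 4) * K' := by rw [← h2]; ring
          _ ≤ q'^J * K' := mul_le_mul_of_nonneg_right h1 hK'0
          _ ≤ q'^J * (K'+1) := by linarith only [pow_nonneg hq'0.le J]
          _ ≤ ε := hJ
end

section
/- Let C ⊆ ℱ be a nonempty compact set. Then sup_{z∈C} sup_{(c,d)∈𝒫} | (1/k_n) · log|σ^{(n)}_{c,d}(z)| − log r_{c,d}(z) | → 0 as n → ∞. -/
open Filter Topology Set

lemma denom_ne (c d : ℤ) (z : ℂ) (hz : 0 < z.im) (h : ¬(c = 0 ∧ d = 0)) :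
    (c : ℂ) * z + (d : ℂ) ≠ 0 := by
  intro h0
  have hi : ((c : ℂ) * z + (d : ℂ)).im = 0 := by rw [h0]; simp
  simp [Complex.add_im, Complex.mul_im] at hi
  have hc0 : c = 0 := hi.resolve_right hz.ne'
  subst hc0
  simp at h0
  exact h ⟨rfl, by exact_mod_cast h0⟩

lemma div_im_eq (c d : ℤ) (z : ℂ) (hz : 0 < z.im) (hcd : Int.gcd c d = 1)
    (h : ¬(c = 0 ∧ d = 0)) :
    (((Int.gcdB c d : ℂ) * z - (Int.gcdA c d : ℂ)) / ((c : ℂ) * z + (d : ℂ))).im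
      = z.im / ‖(c : ℂ) * z + (d : ℂ)‖ ^ 2 := by
  have hw : (c : ℂ) * z + (d : ℂ) ≠ 0 := denom_ne c d z hz h
  have hns : Complex.normSq ((c : ℂ) * z + (d : ℂ)) ≠ 0 := by
    simpa [Complex.normSq_eq_zero] using hw
  have h1 : (c : ℝ) * (Int.gcdA c d : ℝ) + (d : ℝ) * (Int.gcdB c d : ℝ) = 1 := by
    have := Int.gcd_eq_gcd_ab c d
    rw [hcd] at this
    exact_mod_cast this.symm
  rw [Complex.div_im, Complex.sq_norm]
  rw [div_sub_div_same]
  rw [eq_div_iff hns, div_mul_cancel₀ _ hns]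
  simp [Complex.add_im, Complex.add_re, Complex.mul_im, Complex.mul_re, Complex.sub_im,
    Complex.sub_re]
  linear_combination z.im * h1

lemma key_identity (α : ℝ) (kk mm : ℕ) (hk : kk ≠ 0) (c d : ℤ) (hcd : Int.gcd c d = 1)
    (h : ¬(c = 0 ∧ d = 0)) (z : ℂ) (hz : 0 < z.im) :
    (1 / (kk : ℝ)) * Real.log (‖sigmaP kk mm c d z‖) - Real.log (rP α c d z)
      = 2 * Real.pi * (α - (mm : ℝ) / (kk : ℝ))
        * (z.im / ‖(c : ℂ) * z + (d : ℂ)‖ ^ 2) := by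
  have hw : (c : ℂ) * z + (d : ℂ) ≠ 0 := denom_ne c d z hz h
  have habs : 0 < ‖(c : ℂ) * z + (d : ℂ)‖ := by
    simpa using (norm_pos_iff.mpr hw)
  set w := (c : ℂ) * z + (d : ℂ)
  set t : ℝ := z.im / ‖w‖ ^ 2
  -- real part of the exponent
  have hre : (2 * Real.pi * Complex.I * (mm : ℂ) *
      ((Int.gcdB c d : ℂ) * z - (Int.gcdA c d : ℂ)) / w).re
      = -(2 * Real.pi * mm * t) := by
    have : (2 * Real.pi * Complex.I * (mm : ℂ) *
        ((Int.gcdB c d : ℂ) * z - (Int.gcdA c d : ℂ)) / w)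
        = ((2 * Real.pi * (mm : ℝ) : ℝ) : ℂ) * (Complex.I *
          (((Int.gcdB c d : ℂ) * z - (Int.gcdA c d : ℂ)) / w)) := by
      push_cast
      ring
    rw [this]
    rw [Complex.re_ofReal_mul, Complex.I_mul_re]
    rw [div_im_eq c d z hz hcd h]
    ring
  -- log of |sigma|
  have hsig : Real.log (‖sigmaP kk mm c d z‖)
      = -(2 * Real.pi * mm * t) - kk * Real.log (‖w‖) := by
    unfold sigmaP
    rw [norm_div, norm_pow, Complex.norm_exp, hre]
    rw [Real.log_div (Real.exp_ne_zero _) (pow_ne_zero _ habs.ne'),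
      Real.log_exp, Real.log_pow]
  have hr : Real.log (rP α c d z)
      = -(2 * Real.pi * α * t) - Real.log (‖w‖) := by
    unfold rP
    rw [Real.log_div (Real.exp_ne_zero _) habs.ne', Real.log_exp]
    simp only [t]
    ring
  rw [hsig, hr]
  have hkr : (kk : ℝ) ≠ 0 := Nat.cast_ne_zero.mpr hk
  field_simp
  ring

lemma Fdom_im (z : ℂ) (hz : z ∈ Fdom) : Real.sqrt 3 / 2 ≤ z.im := by
  obtain ⟨him, h⟩ := hz
  have hs : Real.sqrt 3 ^ 2 = 3 := Real.sq_sqrt (by norm_num)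
  have hs0 : 0 ≤ Real.sqrt 3 := Real.sqrt_nonneg 3
  rcases h with ⟨h1, h2, h3⟩ | ⟨h1, h2, h3⟩
  · have hsq : 1 < z.re ^ 2 + z.im ^ 2 := by
      have := Complex.sq_norm z
      rw [Complex.normSq_apply] at this
      nlinarith
    nlinarith
  · have hz0 : z ≠ 0 := by
      intro h0; rw [h0] at h1; simp at h1
    have : Real.sin (Complex.arg z) = z.im / ‖z‖ := Complex.sin_arg z
    rw [h1, div_one] at this
    rw [← this]
    rw [← Real.sin_pi_div_three]
    apply Real.sin_le_sin_of_le_of_le_pi_div_two _ h3 h2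
    linarith [Real.pi_pos]

lemma Pset_gcd (p : ℤ × ℤ) (hp : p ∈ Pset) : Int.gcd p.1 p.2 = 1 := by
  rcases hp with ⟨h, _⟩ | h
  · exact Int.isCoprime_iff_gcd_eq_one.mp h
  · rw [h]; rfl

lemma Pset_ne (p : ℤ × ℤ) (hp : p ∈ Pset) : ¬(p.1 = 0 ∧ p.2 = 0) := by
  rintro ⟨h1, h2⟩
  rcases hp with ⟨_, hc⟩ | h
  · omega
  · rw [h] at h2; simp at h2

lemma t_bound (p : ℤ × ℤ) (hp : p ∈ Pset) (z : ℂ) (hz : z ∈ Fdom) :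
    z.im / ‖(p.1 : ℂ) * z + (p.2 : ℂ)‖ ^ 2 ≤ max z.im 2 := by
  have him := Fdom_im z hz
  have him0 : 0 < z.im := hz.1
  have hs : Real.sqrt 3 ^ 2 = 3 := Real.sq_sqrt (by norm_num)
  have hs0 : 0 ≤ Real.sqrt 3 := Real.sqrt_nonneg 3
  have himhalf : (1:ℝ)/2 ≤ z.im := by nlinarith
  have hns : ‖(p.1 : ℂ) * z + (p.2 : ℂ)‖ ^ 2
      = ((p.1:ℝ) * z.re + (p.2:ℝ)) ^ 2 + (p.1:ℝ) ^ 2 * z.im ^ 2 := by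
    rw [Complex.sq_norm, Complex.normSq_apply]
    simp [Complex.add_re, Complex.add_im, Complex.mul_re, Complex.mul_im]
    ring
  by_cases hc : p.1 = 0
  · have hp1 : p = (0, 1) := by
      rcases hp with ⟨_, hcc⟩ | h
      · omega
      · exact h
    rw [hp1]
    simp
  · have hc1 : 1 ≤ (p.1:ℝ) ^ 2 := by
      have : 1 ≤ p.1 ^ 2 := by
        rcases lt_or_gt_of_ne hc with h | h <;> nlinarith
      exact_mod_cast this
    have hden : z.im ^ 2 ≤ ‖(p.1 : ℂ) * z + (p.2 : ℂ)‖ ^ 2 := by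
      rw [hns]; nlinarith [sq_nonneg ((p.1:ℝ) * z.re + (p.2:ℝ))]
    have h2 : z.im / ‖(p.1 : ℂ) * z + (p.2 : ℂ)‖ ^ 2 ≤ z.im / z.im ^ 2 := by
      apply div_le_div_of_nonneg_left him0.le (by positivity) hden
    refine le_trans h2 (le_trans ?_ (le_max_right _ _))
    rw [div_le_iff₀ (by positivity)]
    nlinarith


/-- on a nonempty compact `C ⊆ ℱ`,
`sup_{z∈C} sup_{(c,d)∈𝒫} |(1/k_n)·log|σ⁽ⁿ⁾_{c,d}(z)| - log r_{c,d}(z)| → 0`. -/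
theorem log_sigma_approx (α : ℝ) (hα : 0 < α)
    (k m : ℕ → ℕ) (hke : ∀ n, Even (k n)) (hk4 : ∀ n, 4 ≤ k n)
    (hki : Tendsto k atTop atTop)
    (hm : Tendsto (fun n => (m n : ℝ) / (k n : ℝ)) atTop (nhds α))
    (C : Set ℂ) (hCF : C ⊆ Fdom) (hCne : C.Nonempty) (hCc : IsCompact C) :
    ∀ ε : ℝ, 0 < ε → ∀ᶠ n in atTop, ∀ z ∈ C, ∀ p ∈ Pset,
      |(1 / (k n : ℝ)) * Real.log (‖sigmaP (k n) (m n) p.1 p.2 z‖)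
          - Real.log (rP α p.1 p.2 z)| ≤ ε := by
  intro ε hε
  obtain ⟨z₀, hz₀C, hz₀'⟩ := hCc.exists_isMaxOn hCne Complex.continuous_im.continuousOn
  have hz₀ : ∀ w ∈ C, w.im ≤ z₀.im := fun w hw => hz₀' hw
  set B := max z₀.im 2 with hB
  have hB0 : (0:ℝ) < B := lt_of_lt_of_le (by norm_num) (le_max_right _ _)
  have hδ : 0 < ε / (2 * Real.pi * B) := by positivity
  have hev : ∀ᶠ n in atTop, |(m n : ℝ) / (k n : ℝ) - α| ≤ ε / (2 * Real.pi * B) := by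
    have := hm (Metric.closedBall_mem_nhds α hδ)
    simpa [Metric.mem_closedBall, Real.dist_eq] using this
  filter_upwards [hev] with n hn z hzC p hp
  have hk0 : k n ≠ 0 := by have := hk4 n; omega
  have hzF : z ∈ Fdom := hCF hzC
  have hid := key_identity α (k n) (m n) hk0 p.1 p.2 (Pset_gcd p hp) (Pset_ne p hp) z hzF.1
  rw [hid]
  set t : ℝ := z.im / ‖(p.1 : ℂ) * z + (p.2 : ℂ)‖ ^ 2 with htdef
  have ht0 : 0 ≤ t := by
    have := hzF.1
    positivity
  have htB : t ≤ B := le_trans (t_bound p hp z hzF) (max_le_max (hz₀ z hzC) le_rfl)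
  have hq : |α - (m n : ℝ) / (k n : ℝ)| ≤ ε / (2 * Real.pi * B) := by
    rw [abs_sub_comm]; exact hn
  rw [abs_mul, abs_mul, abs_of_pos (by positivity : (0:ℝ) < 2 * Real.pi),
    abs_of_nonneg ht0]
  have step : 2 * Real.pi * |α - (m n : ℝ) / (k n : ℝ)| * t
      ≤ 2 * Real.pi * (ε / (2 * Real.pi * B)) * B := by
    gcongr
  refine le_trans step (le_of_eq ?_)
  field_simp
end

section
/- For every even integer k ≥ 4, every nonnegative integer m, and every real t > 0, both P_{k,m}(1/2 + it) and P_{k,m}(it) are real numbers. -/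
open Filter Topology Set

open Complex in

private lemma denomP_ne_zero {c : ℤ} (hc : 0 < c) {z : ℂ} (hiz : 0 < z.im) (d : ℤ) :
    (c : ℂ) * z + (d : ℂ) ≠ 0 := by
  intro h
  have him : ((c : ℂ) * z + (d : ℂ)).im = (c : ℝ) * z.im := by
    simp [Complex.add_im, Complex.mul_im]
  rw [h] at him
  simp only [Complex.zero_im] at him
  have hc' : (0:ℝ) < (c:ℝ) := by exact_mod_cast hc
  nlinarith

private lemma bezout_pair {c d : ℤ} (hcd : IsCoprime c d) :
    c * Int.gcdA c d + d * Int.gcdB c d = 1 := by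
  have h := Int.gcd_eq_gcd_ab c d
  rw [Int.isCoprime_iff_gcd_eq_one.mp hcd] at h
  exact_mod_cast h.symm

private lemma coprime_shift {c d : ℤ} (e : ℤ) (hcd : IsCoprime c d) :
    IsCoprime c (-(e * c + d)) := by
  have : IsCoprime c (d + c * e) := hcd.add_mul_left_right e
  have := this.neg_right
  rwa [show -(e * c + d) = -(d + c * e) by ring]

private lemma bezout_shift {c d : ℤ} (e : ℤ) (hc : c ≠ 0) (hcd : IsCoprime c d) :
    ∃ n : ℤ, Int.gcdB c (-(e * c + d)) + Int.gcdB c d = n * c ∧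
      Int.gcdA c d - Int.gcdA c (-(e * c + d)) + e * Int.gcdB c (-(e * c + d)) = -(n * d) := by
  have h1 : c * Int.gcdA c d + d * Int.gcdB c d = 1 := bezout_pair hcd
  have h2 : c * Int.gcdA c (-(e*c+d)) + (-(e*c+d)) * Int.gcdB c (-(e*c+d)) = 1 :=
    bezout_pair (coprime_shift e hcd)
  set A := Int.gcdA c d; set B := Int.gcdB c d
  set A₂ := Int.gcdA c (-(e*c+d)); set B₂ := Int.gcdB c (-(e*c+d))
  have key : c * (A - A₂ + e * B₂) = -(d * (B + B₂)) := by linear_combination h1 - h2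
  have hdvd : c ∣ B + B₂ := by
    have : c ∣ d * (B + B₂) := ⟨-(A - A₂ + e * B₂), by linear_combination key⟩
    exact hcd.dvd_of_dvd_mul_left this
  obtain ⟨n, hn⟩ := hdvd
  refine ⟨n, by linear_combination hn, ?_⟩
  have := mul_left_cancel₀ hc (show c * (A - A₂ + e * B₂) = c * (-(n * d)) by
    rw [key, hn]; ring)
  linarith

open Complex in
private lemma conj_sigmaP (k m : ℕ) (hke : Even k) {c : ℤ} (d d₂ : ℤ) (hc : 0 < c)
    (e : ℤ) (hd₂ : d₂ = -(e * c + d)) {z : ℂ} (hz : (starRingEnd ℂ) z = e - z) (hiz : 0 < z.im)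
    (n : ℤ) (hn1 : Int.gcdB c d₂ + Int.gcdB c d = n * c)
    (hn2 : Int.gcdA c d - Int.gcdA c d₂ + e * Int.gcdB c d₂ = -(n * d)) :
    (starRingEnd ℂ) (sigmaP k m c d z) = sigmaP k m c d₂ z := by
  have hne₂ : (c:ℂ) * z + (d₂:ℂ) ≠ 0 := denomP_ne_zero hc hiz d₂
  have hd₂c : (d₂:ℂ) = -((e:ℂ) * (c:ℂ) + (d:ℂ)) := by exact_mod_cast congrArg (Int.cast : ℤ → ℂ) hd₂
  have hc1 : ((Int.gcdB c d₂ : ℂ) + (Int.gcdB c d : ℂ)) = (n:ℂ) * (c:ℂ) := by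
    exact_mod_cast congrArg (Int.cast : ℤ → ℂ) hn1
  have hc2 : ((Int.gcdA c d : ℂ) - (Int.gcdA c d₂ : ℂ) + (e:ℂ) * (Int.gcdB c d₂ : ℂ)) = -((n:ℂ) * (d:ℂ)) := by
    exact_mod_cast congrArg (Int.cast : ℤ → ℂ) hn2
  have hden : (starRingEnd ℂ) ((c:ℂ) * z + (d:ℂ)) = -((c:ℂ) * z + (d₂:ℂ)) := by
    rw [map_add, map_mul, hz]
    simp only [map_intCast]
    linear_combination hd₂c
  unfold sigmaP
  rw [map_div₀, map_pow, hden, hke.neg_pow]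
  congr 1
  rw [← Complex.exp_conj]
  have harg : (starRingEnd ℂ) (2 * Real.pi * Complex.I * (m : ℂ) *
        ((Int.gcdB c d : ℂ) * z - (Int.gcdA c d : ℂ)) / ((c : ℂ) * z + (d : ℂ)))
      = 2 * Real.pi * Complex.I * (m : ℂ) *
        ((Int.gcdB c d₂ : ℂ) * z - (Int.gcdA c d₂ : ℂ)) / ((c : ℂ) * z + (d₂ : ℂ))
        + (-((m:ℤ) * n) : ℤ) * (2 * Real.pi * Complex.I) := by
    rw [map_div₀, hden]
    simp only [map_mul, map_sub, map_intCast, map_natCast, map_ofNat, Complex.conj_I,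
      Complex.conj_ofReal, hz]
    push_cast
    rw [show 2 * (Real.pi:ℂ) * -Complex.I * (m:ℂ) *
        ((Int.gcdB c d : ℂ) * ((e:ℂ) - z) - (Int.gcdA c d : ℂ))
      = -(2 * (Real.pi:ℂ) * Complex.I * (m:ℂ) *
        ((Int.gcdB c d : ℂ) * ((e:ℂ) - z) - (Int.gcdA c d : ℂ))) from by ring, neg_div_neg_eq]
    have hne₃ : z * (c:ℂ) + d₂ ≠ 0 := by rwa [mul_comm]
    field_simp
    linear_combination (m:ℂ) *
      (((e:ℂ) - z) * hc1 - hc2 + (n:ℂ) * hd₂c)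
  rw [harg, Complex.exp_add, Complex.exp_int_mul_two_pi_mul_I, mul_one]

open Complex in
private lemma conj_sigmaP01 (k m : ℕ) (e : ℤ) {z : ℂ} (hz : (starRingEnd ℂ) z = e - z) :
    (starRingEnd ℂ) (sigmaP k m 0 1 z) = sigmaP k m 0 1 z := by
  unfold sigmaP
  simp only [Int.cast_zero, Int.cast_one, zero_mul, zero_add, div_one, one_pow]
  rw [← Complex.exp_conj]
  have harg : (starRingEnd ℂ) (2 * (Real.pi:ℂ) * Complex.I * (m:ℂ) *
        ((Int.gcdB 0 1 : ℂ) * z - (Int.gcdA 0 1 : ℂ)))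
      = 2 * (Real.pi:ℂ) * Complex.I * (m:ℂ) * ((Int.gcdB 0 1 : ℂ) * z - (Int.gcdA 0 1 : ℂ))
        + (((m:ℤ) * (2 * Int.gcdA 0 1 - e * Int.gcdB 0 1)) : ℤ) * (2 * Real.pi * Complex.I) := by
    simp only [map_mul, map_sub, Complex.conj_I, Complex.conj_ofReal, map_ofNat, map_natCast,
      map_intCast, hz]
    push_cast
    ring
  rw [harg, Complex.exp_add, Complex.exp_int_mul_two_pi_mul_I, mul_one]

private lemma pset_eq01 {p : ℤ × ℤ} (hp : p ∈ Pset) (h0 : p.1 = 0) : p = (0, 1) := by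
  rcases hp with ⟨_, hpos⟩ | h
  · omega
  · exact h

/-- The involution `(c,d) ↦ (c, -(e·c+d))` on `Pset`, fixing `(0,1)`. -/
private def flipFun (e : ℤ) (p : ℤ × ℤ) : ℤ × ℤ :=
  if p.1 = 0 then (0, 1) else (p.1, -(e * p.1 + p.2))

private lemma flipFun_mem (e : ℤ) {p : ℤ × ℤ} (hp : p ∈ Pset) : flipFun e p ∈ Pset := by
  unfold flipFun
  by_cases h0 : p.1 = 0
  · simp only [h0, if_pos rfl]; exact Or.inr rfl
  · simp only [h0, if_neg h0]
    rcases hp with ⟨hcop, hpos⟩ | h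
    · exact Or.inl ⟨coprime_shift e hcop, hpos⟩
    · exact absurd (by rw [h]) h0

private def flipP (e : ℤ) (p : Pset) : Pset := ⟨flipFun e p.1, flipFun_mem e p.2⟩

private lemma flipP_involutive (e : ℤ) : Function.Involutive (flipP e) := by
  intro p
  obtain ⟨p, hp⟩ := p
  apply Subtype.ext
  show flipFun e (flipFun e p) = p
  by_cases h0 : p.1 = 0
  · have h01 : p = (0, 1) := pset_eq01 hp h0
    subst h01
    rfl
  · unfold flipFun
    simp only [if_neg h0]
    ext <;> simp <;> ring

private def flipE (e : ℤ) : Equiv.Perm Pset := (flipP_involutive e).toPerm _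

open Complex in
private lemma conj_poincare (k m : ℕ) (hke : Even k) (e : ℤ) {z : ℂ}
    (hz : (starRingEnd ℂ) z = e - z) (hiz : 0 < z.im) :
    (starRingEnd ℂ) (poincareP k m z) = poincareP k m z := by
  unfold poincareP
  rw [show (starRingEnd ℂ) (∑' p : Pset, sigmaP k m p.1.1 p.1.2 z)
      = ∑' p : Pset, (starRingEnd ℂ) (sigmaP k m p.1.1 p.1.2 z) from tsum_star]
  rw [← (flipE e).tsum_eq (fun p : Pset => sigmaP k m p.1.1 p.1.2 z)]
  apply tsum_congr
  intro p
  obtain ⟨q, hq⟩ := p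
  by_cases h0 : q.1 = 0
  · have h01 : q = (0, 1) := pset_eq01 hq h0
    subst h01
    have hfix : flipE e ⟨(0,1), hq⟩ = ⟨(0,1), hq⟩ := by
      apply Subtype.ext; rfl
    rw [hfix]
    exact conj_sigmaP01 k m e hz
  · have hpos : 0 < q.1 := by
      rcases hq with ⟨_, hpos⟩ | h
      · exact hpos
      · exact absurd (by rw [h]) h0
    have hcop : IsCoprime q.1 q.2 := by
      rcases hq with ⟨hcop, _⟩ | h
      · exact hcop
      · exact absurd (by rw [h]) h0
    have hflip : ((flipE e ⟨q, hq⟩ : Pset) : ℤ × ℤ) = (q.1, -(e * q.1 + q.2)) := by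
      show flipFun e q = _
      unfold flipFun
      rw [if_neg h0]
    obtain ⟨n, hn1, hn2⟩ := bezout_shift e h0 hcop
    rw [show (flipE e ⟨q, hq⟩ : Pset).1.1 = q.1 from by rw [hflip],
        show (flipE e ⟨q, hq⟩ : Pset).1.2 = -(e * q.1 + q.2) from by rw [hflip]]
    exact conj_sigmaP k m hke q.2 (-(e * q.1 + q.2)) hpos e rfl hz hiz n hn1 hn2

/-- `P_{k,m}(1/2 + it)` and `P_{k,m}(it)` are real for all `t > 0`. -/
theorem poincare_real_on_lines (k m : ℕ) (hke : Even k) (hk4 : 4 ≤ k)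
    (t : ℝ) (ht : 0 < t) :
    (poincareP k m (1/2 + t * Complex.I)).im = 0 ∧
    (poincareP k m (t * Complex.I)).im = 0 := by
  have him1 : (0:ℝ) < ((1:ℂ)/2 + t * Complex.I).im := by simp [ht]
  have him2 : (0:ℝ) < ((t:ℂ) * Complex.I).im := by simp [ht]
  constructor
  · apply Complex.conj_eq_iff_im.mp
    apply conj_poincare k m hke 1 _ him1
    have : (starRingEnd ℂ) ((1:ℂ)/2 + t * Complex.I) = 1/2 - t * Complex.I := by
      rw [map_add, map_div₀, map_one, map_ofNat, map_mul, Complex.conj_ofReal, Complex.conj_I]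
      ring
    rw [this]; push_cast; ring
  · apply Complex.conj_eq_iff_im.mp
    apply conj_poincare k m hke 0 _ him2
    have : (starRingEnd ℂ) ((t:ℂ) * Complex.I) = -(t * Complex.I) := by
      rw [map_mul, Complex.conj_ofReal, Complex.conj_I]
      ring
    rw [this]; push_cast; ring
end

section
/- The function F is strictly decreasing on the interval (√3/2, ∞); moreover F(t) → 1/(2√3 π) as t → (√3/2)⁺ and F(t) → 0 as t → ∞. -/
open Filter Topology Set

lemma log_gt_aux (u : ℝ) (hu : 1 < u) : 2*(u-1)/(u+1) < Real.log u := by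
  have key : StrictMonoOn (fun u : ℝ => Real.log u - 2*(u-1)/(u+1)) (Set.Ici 1) := by
    apply strictMonoOn_of_deriv_pos (convex_Ici 1)
    · apply ContinuousOn.sub
      · exact Real.continuousOn_log.mono (fun x hx => by
          simp only [Set.mem_Ici] at hx
          simp only [Set.mem_compl_iff, Set.mem_singleton_iff]
          intro h; rw [h] at hx; linarith)
      · apply ContinuousOn.div
        · fun_prop
        · fun_prop
        · intro x hx; simp only [Set.mem_Ici] at hx; intro h; nlinarith
    · intro x hx
      rw [interior_Ici] at hx
      simp only [Set.mem_Ioi] at hx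
      have hx0 : (0:ℝ) < x := by linarith
      have hx1 : x + 1 ≠ 0 := by intro h; nlinarith
      have h1 : HasDerivAt (fun u : ℝ => Real.log u - 2*(u-1)/(u+1))
          (x⁻¹ - ((2*1)*(x+1) - (2*(x-1))*1)/((x+1)^2)) x :=
        (Real.hasDerivAt_log hx0.ne').sub
          ((((hasDerivAt_id x).sub_const 1).const_mul 2).div
            ((hasDerivAt_id x).add_const 1) hx1)
      rw [h1.deriv]
      have h2 : (0:ℝ) < (x+1)^2 := by positivity
      rw [inv_eq_one_div, div_sub_div _ _ hx0.ne' h2.ne']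
      apply div_pos
      · nlinarith [sq_nonneg (x-1)]
      · positivity
  have h := key (Set.self_mem_Ici) (Set.mem_Ici.mpr hu.le) hu
  simp only [Real.log_one] at h
  linarith [h]

lemma phi_pos (u : ℝ) (hu : 1 < u) :
    2*(u-1/4)*(u-1)*(Real.log u + 1) < (3*u-3/2)*u*Real.log u := by
  have hL := log_gt_aux u hu
  have hL' : 2*(u-1) < Real.log u * (u+1) := by
    rw [div_lt_iff₀ (by linarith)] at hL; linarith
  have hpos : (0:ℝ) < u^2 + u - 1/2 := by nlinarith
  have h2 := mul_lt_mul_of_pos_left hL' hpos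
  nlinarith [h2, sq_nonneg (u-1), show (0:ℝ) < u + 1 by linarith]

lemma Ffun_hasDeriv (t : ℝ) (ht0 : 0 < t) (ht : 3/4 < t^2) :
    HasDerivAt Ffun
      ((1/(4*Real.pi) * (2*t*Real.log (1/4+t^2) + 2*t) * (t*(t^2-3/4))
        - 1/(4*Real.pi) * ((1/4+t^2)*Real.log (1/4+t^2)) * (1*(t^2-3/4) + t*(2*t)))
        / (t*(t^2-3/4))^2) t := by
  have hupos : (0:ℝ) < 1/4 + t^2 := by positivity
  have hu : HasDerivAt (fun t : ℝ => 1/4 + t^2) (2*t) t := by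
    simpa using (hasDerivAt_pow 2 t).const_add (1/4 : ℝ)
  have hlog : HasDerivAt (fun t : ℝ => Real.log (1/4 + t^2)) (2*t/(1/4+t^2)) t :=
    hu.log hupos.ne'
  have hN : HasDerivAt (fun t : ℝ => (1/4+t^2) * Real.log (1/4+t^2))
      (2*t*Real.log (1/4+t^2) + 2*t) t := by
    have := hu.mul hlog
    rw [mul_div_cancel₀ _ hupos.ne'] at this
    exact this
  have hD : HasDerivAt (fun t : ℝ => t*(t^2-3/4)) (1*(t^2-3/4) + t*(2*t)) t := by
    exact (hasDerivAt_id t).mul (by simpa using (hasDerivAt_pow 2 t).sub_const (3/4 : ℝ))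
  have hDne : t*(t^2-3/4) ≠ 0 := (mul_pos ht0 (by linarith)).ne'
  exact ((hN.const_mul (1/(4*Real.pi))).div hD hDne)


set_option maxHeartbeats 1600000 in
/-- `F` is strictly decreasing on `(√3/2, ∞)`, `F(t) → 1/(2√3π)` as
`t → (√3/2)⁺`, and `F(t) → 0` as `t → ∞`. -/
theorem Ffun_strictAnti_and_limits :
    StrictAntiOn Ffun (Set.Ioi (Real.sqrt 3 / 2)) ∧
    Tendsto Ffun (nhdsWithin (Real.sqrt 3 / 2) (Set.Ioi (Real.sqrt 3 / 2)))
      (nhds (1 / (2 * Real.sqrt 3 * Real.pi))) ∧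
    Tendsto Ffun atTop (nhds 0) := by
  have hs3 : Real.sqrt 3 ^ 2 = 3 := Real.sq_sqrt (by norm_num)
  have hsp : (0:ℝ) < Real.sqrt 3 / 2 := by positivity
  have hss : (Real.sqrt 3 / 2)^2 = 3/4 := by rw [div_pow, hs3]; norm_num
  have hpi : (0:ℝ) < Real.pi := Real.pi_pos
  -- facts for t in Ioi
  have hfacts : ∀ t : ℝ, Real.sqrt 3 / 2 < t → 0 < t ∧ 3/4 < t^2 := by
    intro t ht
    have ht0 : 0 < t := lt_trans hsp ht
    refine ⟨ht0, ?_⟩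
    nlinarith [hss, hsp]
  refine ⟨?_, ?_, ?_⟩
  · -- strict anti
    apply strictAntiOn_of_deriv_neg (convex_Ioi _)
    · intro t ht
      obtain ⟨ht0, ht2⟩ := hfacts t ht
      exact (Ffun_hasDeriv t ht0 ht2).continuousAt.continuousWithinAt
    · intro t ht
      rw [interior_Ioi] at ht
      obtain ⟨ht0, ht2⟩ := hfacts t ht
      rw [(Ffun_hasDeriv t ht0 ht2).deriv]
      apply div_neg_of_neg_of_pos
      · have hu1 : (1:ℝ) < 1/4 + t^2 := by linarith
        have hphi := phi_pos (1/4+t^2) hu1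
        have hc : (0:ℝ) < 1/(4*Real.pi) := by positivity
        nlinarith [hphi, hc, mul_lt_mul_of_pos_left hphi hc]
      · exact pow_pos (mul_pos ht0 (by linarith)) 2
  · -- limit at (√3/2)⁺
    have hslope : Tendsto (slope Real.log 1) (𝓝[≠] 1) (𝓝 1) := by
      have h := Real.hasDerivAt_log one_ne_zero
      rw [hasDerivAt_iff_tendsto_slope] at h
      simpa using h
    have hcomp : Tendsto (fun t : ℝ => 1/4 + t^2) (𝓝[>] (Real.sqrt 3 / 2)) (𝓝[≠] 1) := by
      apply tendsto_nhdsWithin_of_tendsto_nhds_of_eventually_within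
      · have hc : ContinuousAt (fun t : ℝ => 1/4 + t^2) (Real.sqrt 3 / 2) := by fun_prop
        have h := hc.tendsto
        rw [show (1:ℝ)/4 + (Real.sqrt 3 / 2)^2 = 1 by rw [hss]; norm_num] at h
        exact h.mono_left nhdsWithin_le_nhds
      · filter_upwards [self_mem_nhdsWithin] with t ht
        obtain ⟨ht0, ht2⟩ := hfacts t ht
        simp only [Set.mem_compl_iff, Set.mem_singleton_iff]
        intro h; nlinarith
    have hA := hslope.comp hcomp
    have hB : Tendsto (fun t : ℝ => 1/(4*Real.pi) * ((1/4+t^2)/t))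
        (𝓝[>] (Real.sqrt 3 / 2)) (𝓝 (1/(4*Real.pi) * ((1/4+(Real.sqrt 3/2)^2)/(Real.sqrt 3/2)))) := by
      have hc : ContinuousAt (fun t : ℝ => 1/(4*Real.pi) * ((1/4+t^2)/t)) (Real.sqrt 3 / 2) := by
        apply ContinuousAt.mul continuousAt_const
        exact ContinuousAt.div (by fun_prop) continuousAt_id hsp.ne'
      exact hc.tendsto.mono_left nhdsWithin_le_nhds
    have hAB := hB.mul hA
    have hval : 1/(4*Real.pi) * ((1/4+(Real.sqrt 3/2)^2)/(Real.sqrt 3/2)) * 1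
        = 1 / (2 * Real.sqrt 3 * Real.pi) := by
      rw [hss]
      have h3 : Real.sqrt 3 ≠ 0 := by positivity
      field_simp
      ring
    rw [hval] at hAB
    apply hAB.congr'
    filter_upwards [self_mem_nhdsWithin] with t ht
    obtain ⟨ht0, ht2⟩ := hfacts t ht
    show 1/(4*Real.pi) * ((1/4+t^2)/t) * slope Real.log 1 (1/4+t^2) = Ffun t
    rw [slope_def_field, Real.log_one, Ffun]
    have h1 : (1:ℝ)/4 + t^2 - 1 ≠ 0 := by intro h; nlinarith
    field_simp
    ring
  · -- limit at ∞
    have hlogdiv : Tendsto (fun t : ℝ => Real.log t / t) atTop (𝓝 0) :=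
      Real.isLittleO_log_id_atTop.tendsto_div_nhds_zero
    have hb : Tendsto (fun t : ℝ => (Real.log 2 + 2*Real.log t)/t) atTop (𝓝 0) := by
      have h1 : Tendsto (fun t : ℝ => Real.log 2 / t) atTop (𝓝 0) :=
        tendsto_const_nhds.div_atTop tendsto_id
      have h2 : Tendsto (fun t : ℝ => 2*(Real.log t/t)) atTop (𝓝 (2*0)) :=
        hlogdiv.const_mul 2
      have h3 := h1.add h2
      simp only [mul_zero, add_zero] at h3
      apply h3.congr
      intro t
      rw [add_div]
      ring
    have hmid : Tendsto (fun t : ℝ => Real.log (1/4+t^2)/t) atTop (𝓝 0) := by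
      apply tendsto_of_tendsto_of_tendsto_of_le_of_le' tendsto_const_nhds hb
      · filter_upwards [eventually_ge_atTop (1:ℝ)] with t ht
        exact div_nonneg (Real.log_nonneg (by nlinarith)) (by linarith)
      · filter_upwards [eventually_ge_atTop (1:ℝ)] with t ht
        have hle : Real.log (1/4+t^2) ≤ Real.log 2 + 2*Real.log t := by
          have h1 : Real.log (1/4+t^2) ≤ Real.log (2*t^2) :=
            Real.log_le_log (by positivity) (by nlinarith)
          rwa [Real.log_mul (by norm_num) (by positivity), Real.log_pow,
            Nat.cast_ofNat] at h1
        have ht0 : (0:ℝ) < t := by linarith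
        exact div_le_div_of_nonneg_right hle ht0.le
    have hAtop : Tendsto (fun t : ℝ => (1/4+t^2)/(t^2-3/4)) atTop (𝓝 1) := by
      have htop : Tendsto (fun t : ℝ => t^2 - 3/4) atTop atTop := by
        have := tendsto_atTop_add_const_right atTop (-(3/4:ℝ))
          (tendsto_pow_atTop (two_ne_zero) : Tendsto (fun x : ℝ => x ^ 2) atTop atTop)
        simpa [sub_eq_add_neg] using this
      have h1 : Tendsto (fun t : ℝ => 1 + 1/(t^2-3/4)) atTop (𝓝 (1+0)) :=
        tendsto_const_nhds.add (tendsto_const_nhds.div_atTop htop)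
      rw [add_zero] at h1
      apply h1.congr'
      filter_upwards [eventually_ge_atTop (1:ℝ)] with t ht
      have h2 : t^2 - 3/4 ≠ 0 := ne_of_gt (by nlinarith)
      rw [eq_div_iff h2, add_mul, one_mul, one_div, inv_mul_cancel₀ h2]
      ring
    have hprod := ((hAtop.const_mul (1/(4*Real.pi))).mul hmid)
    rw [mul_zero] at hprod
    apply hprod.congr'
    filter_upwards [eventually_ge_atTop (1:ℝ)] with t ht
    have ht0 : (0:ℝ) < t := by linarith
    have h2 : t^2 - 3/4 ≠ 0 := ne_of_gt (by nlinarith)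
    show 1/(4*Real.pi) * ((1/4+t^2)/(t^2-3/4)) * (Real.log (1/4+t^2)/t) = Ffun t
    conv_rhs => rw [Ffun, ← div_div]
    ring
end

section
/- Let 0 < α ≤ √3 log(3)/(4π). Then for every real t > √3/2 and every pair of coprime integers (c,d) with c ≥ 1 and (c,d) ∉ {(1,0), (1,−1)}, we have r_{c,d}(1/2 + it) < r_{1,0}(1/2 + it). -/
open Filter Topology Set

set_option maxHeartbeats 1000000

private lemma log3_ub : Real.log 3 ≤ 11/10 := by
  have h10 : ((3:ℝ)^(10:ℕ)) ≤ Real.exp 11 := by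
    have h2 : (2.7182818283:ℝ) ≤ Real.exp 1 := (Real.exp_one_gt_d9).le
    have he : Real.exp 11 = (Real.exp 1)^(11:ℕ) := by
      rw [← Real.exp_nat_mul]; norm_num
    rw [he]
    calc ((3:ℝ)^(10:ℕ)) ≤ (2.7182818283:ℝ)^(11:ℕ) := by norm_num
      _ ≤ (Real.exp 1)^(11:ℕ) := pow_le_pow_left₀ (by norm_num) h2 _
  have h := (Real.log_le_iff_le_exp (by positivity : (0:ℝ) < (3:ℝ)^(10:ℕ))).mpr h10
  rw [Real.log_pow] at h
  push_cast at h
  linarith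

private lemma log3_lb : (23:ℝ)/21 ≤ Real.log 3 := by
  have h : Real.exp 23 ≤ (3:ℝ)^(21:ℕ) := by
    have h1 : Real.exp 1 ≤ 2.7182818286 := (Real.exp_one_lt_d9).le
    have he : Real.exp 23 = (Real.exp 1)^(23:ℕ) := by
      rw [← Real.exp_nat_mul]; norm_num
    rw [he]
    calc (Real.exp 1)^(23:ℕ) ≤ (2.7182818286:ℝ)^(23:ℕ) :=
          pow_le_pow_left₀ (Real.exp_pos 1).le h1 _
      _ ≤ (3:ℝ)^(21:ℕ) := by norm_num
  have h2 := (Real.le_log_iff_exp_le (by positivity : (0:ℝ) < (3:ℝ)^(21:ℕ))).mpr h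
  rw [Real.log_pow] at h2
  push_cast at h2
  linarith

private lemma log_ge_pade {y : ℝ} (hy : 1 ≤ y) : 2*(y-1)/(y+1) ≤ Real.log y := by
  have hderiv : ∀ x ∈ interior (Set.Ici (1:ℝ)),
      HasDerivAt (fun x : ℝ => Real.log x - 2*(x-1)/(x+1)) (1/x - 4/(x+1)^2) x := by
    intro x hx
    rw [interior_Ici] at hx
    have hx0 : (0:ℝ) < x := lt_trans one_pos hx
    have hne : x + 1 ≠ 0 := by positivity
    have hl : HasDerivAt Real.log x⁻¹ x := Real.hasDerivAt_log hx0.ne'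
    have ha : HasDerivAt (fun x : ℝ => 2*(x-1)) 2 x := by
      simpa using ((hasDerivAt_id x).sub_const 1).const_mul (2:ℝ)
    have hb : HasDerivAt (fun x : ℝ => x+1) 1 x := (hasDerivAt_id x).add_const 1
    have h2 : HasDerivAt (fun x : ℝ => 2*(x-1)/(x+1)) (4/(x+1)^2) x := by
      have := ha.div hb hne
      exact this.congr_deriv (by ring)
    rw [one_div]; exact hl.sub h2
  have mono : MonotoneOn (fun x : ℝ => Real.log x - 2*(x-1)/(x+1)) (Set.Ici 1) := by
    apply monotoneOn_of_deriv_nonneg (convex_Ici 1)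
    · apply ContinuousOn.sub
      · intro x hx
        have hx0 : (0:ℝ) < x := lt_of_lt_of_le one_pos hx
        exact (Real.continuousAt_log hx0.ne').continuousWithinAt
      · apply ContinuousOn.div (by fun_prop) (by fun_prop)
        intro x hx
        have hx1 : (1:ℝ) ≤ x := hx
        positivity
    · intro x hx
      exact (hderiv x hx).differentiableAt.differentiableWithinAt
    · intro x hx
      rw [(hderiv x hx).deriv]
      rw [interior_Ici] at hx
      have hx0 : (0:ℝ) < x := lt_trans one_pos hx
      have h4 : 4/(x+1)^2 ≤ 1/x := by
        rw [div_le_div_iff₀ (by positivity) hx0]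
        nlinarith [sq_nonneg (x-1)]
      linarith
  have h := mono (Set.mem_Ici.mpr le_rfl) (Set.mem_Ici.mpr hy) hy
  simp only [Real.log_one] at h
  norm_num at h
  linarith

private lemma log_le_half {y : ℝ} (hy : 1 ≤ y) : Real.log y ≤ (y^2 - 1)/(2*y) := by
  have hy0 : (0:ℝ) < y := lt_of_lt_of_le one_pos hy
  rcases eq_or_lt_of_le hy with h | h
  · rw [← h]; norm_num
  · have hlog : 0 < Real.log y := Real.log_pos h
    have hs : Real.log y < Real.sinh (Real.log y) := Real.self_lt_sinh_iff.mpr hlog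
    rw [Real.sinh_log hy0] at hs
    have : (y - y⁻¹)/2 = (y^2-1)/(2*y) := by field_simp
    linarith [hs, this.le, this.ge]

private lemma logA2 {a b : ℝ} (hb : 0 < b) (hab : b ≤ a) :
    (a - b)/(a + b) ≤ (Real.log a - Real.log b)/2 := by
  have ha : 0 < a := lt_of_lt_of_le hb hab
  have h := log_ge_pade (show (1:ℝ) ≤ a / b from (one_le_div hb).mpr hab)
  rw [Real.log_div ha.ne' hb.ne'] at h
  have e : 2*(a/b - 1)/(a/b + 1) = 2*((a-b)/(a+b)) := by
    have hba : a + b ≠ 0 := by positivity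
    field_simp
  rw [e] at h
  linarith

private lemma logB2 {a b : ℝ} (hb : 0 < b) (hab : b ≤ a) :
    Real.log a - Real.log b ≤ (a^2 - b^2)/(2*(a*b)) := by
  have ha : 0 < a := lt_of_lt_of_le hb hab
  have h := log_le_half (show (1:ℝ) ≤ a / b from (one_le_div hb).mpr hab)
  rw [Real.log_div ha.ne' hb.ne'] at h
  have e : ((a/b)^2 - 1)/(2*(a/b)) = (a^2 - b^2)/(2*(a*b)) := by
    field_simp
  rw [e] at h
  exact h

private lemma key_ineq (t C Q : ℝ) (ht : Real.sqrt 3 / 2 < t) (hC0 : 0 < C)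
    (hC : C ≤ Real.sqrt 3 * Real.log 3 / 2 * t)
    (hQ : t ^ 2 + 1 / 4 + 2 ≤ Q) :
    C / (t ^ 2 + 1 / 4) - C / Q < Real.log Q / 2 - Real.log (t ^ 2 + 1 / 4) / 2 := by
  have hs0 : (0:ℝ) < Real.sqrt 3 := Real.sqrt_pos.mpr (by norm_num)
  have hs2 : Real.sqrt 3 ^ 2 = 3 := Real.sq_sqrt (by norm_num)
  have ht0 : 0 < t := lt_trans (by positivity) ht
  have ht2 : 3 / 4 < t ^ 2 := by nlinarith [ht, hs0, hs2]
  obtain ⟨u, hu⟩ : ∃ u : ℝ, u = t ^ 2 + 1/4 := ⟨_, rfl⟩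
  obtain ⟨L, hL⟩ : ∃ L : ℝ, L = Real.log 3 := ⟨_, rfl⟩
  rw [← hu]
  have hL1 : 23/21 ≤ L := hL ▸ log3_lb
  have hL2 : L ≤ 11/10 := hL ▸ log3_ub
  have hL0 : 0 < L := by linarith
  have hu1 : 1 < u := by rw [hu]; linarith
  have hu0 : 0 < u := by linarith
  have hQ1 : (0:ℝ) < u + 2 := by linarith
  have hQu : u + 2 ≤ Q := by rw [hu]; linarith
  have hQ0 : 0 < Q := by linarith
  have hC' : C ≤ Real.sqrt 3 * L / 2 * t := hL ▸ hC
  have hst : Real.sqrt 3 * t < t ^ 2 + 3 / 4 := by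
    have hne : 0 < t - Real.sqrt 3 / 2 := by linarith
    nlinarith [mul_pos hne hne, hs2]
  have hLsq : L * L ≤ 121/100 := by nlinarith [hL2, hL0]
  have hCu : 2 * C ≤ u + 2 := by
    have hsq := sq_nonneg (t - Real.sqrt 3 * L / 2)
    rw [hu]
    nlinarith [hC', hsq, hs2, hLsq, hL0, ht0]
  have hC2Q : 2 * C ≤ Q := le_trans hCu hQu
  -- Step 1
  have step1 : C / (u+2) - C / Q ≤ (Real.log Q - Real.log (u+2)) / 2 := by
    have hA := logA2 hQ1 hQu
    have h2 : C / (u+2) - C / Q ≤ (Q - (u+2)) / (Q + (u+2)) := by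
      have hfac : (0:ℝ) ≤ (u+2)*Q - C*(Q + (u+2)) := by
        nlinarith [mul_nonneg (show (0:ℝ) ≤ u + 2 - 2*C by linarith) hQ0.le,
          mul_nonneg (show (0:ℝ) ≤ Q - 2*C by linarith) hQ1.le]
      have hprod : (0:ℝ) ≤ (Q - (u+2)) * ((u+2)*Q - C*(Q + (u+2))) :=
        mul_nonneg (by linarith) hfac
      rw [div_sub_div _ _ (ne_of_gt hQ1) (ne_of_gt hQ0),
        div_le_div_iff₀ (by positivity) (by positivity)]
      nlinarith [hprod, sq_nonneg (Q - (u+2))]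
    linarith
  -- Step 2
  have step2 : C / u - C / (u+2) < (Real.log (u+2) - Real.log u) / 2 := by
    have heq : C / u - C / (u+2) = 2 * C / (u * (u+2)) := by
      field_simp; ring
    have hP : (0:ℝ) < u * (u+2) := by positivity
    rw [heq, div_lt_div_iff₀ hP two_pos]
    rcases le_or_gt u (9/5) with hcase | hcase
    · -- small u
      have h1 : Real.sqrt 3 * t * L < (u + 1/2) * L := by
        apply mul_lt_mul_of_pos_right _ hL0
        rw [hu]; linarith [hst]
      have hC4 : 4 * C < L * (2*u+1) := by nlinarith [hC', h1]
      have hy : u + 2 ≤ 3 * u := by linarith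
      have hlog := logB2 hQ1 hy
      have h3u : Real.log (3*u) = L + Real.log u := by
        rw [hL, Real.log_mul (by norm_num) (ne_of_gt hu0)]
      rw [h3u] at hlog
      have hmul : (L - ((3*u)^2 - (u+2)^2)/(2*(3*u*(u+2)))) * (u*(u+2))
          = L * (u*(u+2)) - (8*u^2 - 4*u - 4)/6 := by
        field_simp; ring
      have hkey : (u - 1) * (6 * L * (u+1) - (8*u + 4)) ≥ 0 := by
        have hh : (0:ℝ) ≤ (L - 23/21) * (u + 1) :=
          mul_nonneg (by linarith) (by linarith)
        apply mul_nonneg (by linarith)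
        nlinarith [hh, hcase]
      have hfin : 4 * C < L * (u*(u+2)) - (8*u^2 - 4*u - 4)/6 := by
        nlinarith [hC4, hkey]
      calc 2 * C * 2 = 4 * C := by ring
        _ < L * (u*(u+2)) - (8*u^2 - 4*u - 4)/6 := hfin
        _ = (L - ((3*u)^2 - (u+2)^2)/(2*(3*u*(u+2)))) * (u*(u+2)) := hmul.symm
        _ ≤ (Real.log (u+2) - Real.log u) * (u*(u+2)) := by
            apply mul_le_mul_of_nonneg_right _ hP.le
            linarith [hlog]
    · -- large u
      have hA := logA2 hu0 (show u ≤ u + 2 by linarith)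
      have hb4 : 4 / (2*u+2) ≤ Real.log (u+2) - Real.log u := by
        have e : ((u+2) - u)/((u+2) + u) = 2/(2*u+2) := by
          rw [div_eq_div_iff (by linarith) (by linarith)]; ring
        rw [e] at hA
        have e2 : (4:ℝ)/(2*u+2) = 2*(2/(2*u+2)) := by ring
        rw [e2]
        linarith
      have hv : (0:ℝ) ≤ u - 9/5 := by linarith
      have hsqlt : (Real.sqrt 3 * L * t * (u+1))^2 < (u * (u+2))^2 := by
        have ht2u : t^2 = u - 1/4 := by rw [hu]; ring
        have hexp : (Real.sqrt 3 * L * t * (u+1))^2 = 3 * (L*L) * t^2 * (u+1)^2 := by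
          have e3 : (Real.sqrt 3 * L * t * (u+1))^2
              = Real.sqrt 3^2 * ((L*L) * t^2 * (u+1)^2) := by ring
          rw [e3, hs2]; ring
        rw [hexp, ht2u]
        have hpoly : (363/100) * (u - 1/4) * (u+1)^2 < (u * (u+2))^2 := by
          nlinarith [hv, mul_nonneg hv hv, mul_nonneg (mul_nonneg hv hv) hv,
            mul_nonneg (mul_nonneg hv hv) (mul_nonneg hv hv)]
        have hmono : 3 * (L*L) * (u - 1/4) * (u+1)^2 ≤ (363/100) * (u - 1/4) * (u+1)^2 := by
          have hfac : (0:ℝ) ≤ (u - 1/4) * (u+1)^2 :=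
            mul_nonneg (by linarith) (sq_nonneg _)
          have hprod2 : (0:ℝ) ≤ (121/100 - L*L) * ((u - 1/4) * (u+1)^2) :=
            mul_nonneg (by linarith) hfac
          nlinarith [hprod2]
        linarith [hpoly, hmono]
      have hlin : Real.sqrt 3 * L * t * (u+1) < u * (u+2) := by
        exact lt_of_pow_lt_pow_left₀ 2 (by positivity) hsqlt
      have h4C : 4 * C * (2*u+2) < 4 * (u * (u+2)) := by
        have h2CS : 2 * C ≤ Real.sqrt 3 * L * t := by linarith [hC']
        have hh : (0:ℝ) ≤ (Real.sqrt 3 * L * t - 2*C) * (u + 1) :=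
          mul_nonneg (by linarith) (by linarith)
        linarith [hh, hlin]
      calc 2 * C * 2 = 4 * C := by ring
        _ < 4 * (u*(u+2)) / (2*u+2) := by
            rw [lt_div_iff₀ (by linarith : (0:ℝ) < 2*u+2)]
            linarith [h4C]
        _ = (4 / (2*u+2)) * (u*(u+2)) := by ring
        _ ≤ (Real.log (u+2) - Real.log u) * (u*(u+2)) :=
            mul_le_mul_of_nonneg_right hb4 hP.le
  linarith [step1, step2]

/-- for `0 < α ≤ √3·log 3/(4π)`, all `t > √3/2` and all coprime `(c,d)` with
`c ≥ 1`, `(c,d) ∉ {(1,0),(1,-1)}`: `r_{c,d}(1/2+it) < r_{1,0}(1/2+it)`. -/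
theorem rcd_lt_r10 (α : ℝ) (hα : 0 < α)
    (hα2 : α ≤ Real.sqrt 3 * Real.log 3 / (4 * Real.pi))
    (t : ℝ) (ht : Real.sqrt 3 / 2 < t)
    (c d : ℤ) (hcd : IsCoprime c d) (hc : 1 ≤ c)
    (h1 : (c, d) ≠ (1, 0)) (h2 : (c, d) ≠ (1, -1)) :
    rP α c d (1/2 + t * Complex.I) < rP α 1 0 (1/2 + t * Complex.I) := by
  have hπ : (0:ℝ) < Real.pi := Real.pi_pos
  have hs0 : (0:ℝ) < Real.sqrt 3 := Real.sqrt_pos.mpr (by norm_num)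
  have hs2 : Real.sqrt 3 ^ 2 = 3 := Real.sq_sqrt (by norm_num)
  have ht0 : 0 < t := lt_trans (by positivity) ht
  have ht2 : 3 / 4 < t ^ 2 := by nlinarith [ht, hs0, hs2]
  set z : ℂ := 1/2 + t * Complex.I with hz
  have him : z.im = t := by simp [hz]
  have habs2 : ∀ a b : ℤ, ‖(a:ℂ) * z + (b:ℂ)‖ ^ 2
      = ((a:ℝ)/2 + (b:ℝ))^2 + (a:ℝ)^2 * t^2 := by
    intro a b
    rw [Complex.sq_norm, Complex.normSq_apply]
    simp [hz, Complex.add_re, Complex.add_im, Complex.mul_re, Complex.mul_im]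
    ring
  have hA2 : ‖(c:ℂ) * z + (d:ℂ)‖ ^ 2
      = ((c:ℝ)/2 + (d:ℝ))^2 + (c:ℝ)^2 * t^2 := habs2 c d
  have hB2 : ‖((1:ℤ):ℂ) * z + ((0:ℤ):ℂ)‖ ^ 2 = t^2 + 1/4 := by
    rw [habs2 1 0]; push_cast; ring
  -- lower bound for A²
  have hQge : t^2 + 1/4 + 2 ≤ ((c:ℝ)/2 + (d:ℝ))^2 + (c:ℝ)^2 * t^2 := by
    rcases eq_or_lt_of_le hc with hc1 | hc2
    · -- c = 1
      have hceq : c = 1 := hc1.symm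
      subst hceq
      have hd : 1 ≤ d ∨ d ≤ -2 := by
        rcases lt_trichotomy d 0 with h | h | h
        · right
          by_contra hcon
          push_neg at hcon
          interval_cases d
          · exact h2 rfl
        · exact absurd (by rw [h]) h1
        · left; omega
      rcases hd with hd | hd
      · have : (1:ℝ) ≤ (d:ℝ) := by exact_mod_cast hd
        push_cast
        nlinarith [this]
      · have : (d:ℝ) ≤ -2 := by exact_mod_cast hd
        push_cast
        nlinarith [this]
    · have hc2' : (2:ℝ) ≤ (c:ℝ) := by exact_mod_cast hc2
      have hcsq : (4:ℝ) ≤ (c:ℝ)^2 := by nlinarith [hc2']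
      have : (0:ℝ) ≤ ((c:ℝ)^2 - 4) * t^2 := mul_nonneg (by linarith) (sq_nonneg t)
      nlinarith [sq_nonneg ((c:ℝ)/2 + (d:ℝ)), this, ht2]
  have hQA : t^2 + 1/4 + 2 ≤ ‖(c:ℂ) * z + (d:ℂ)‖ ^ 2 := by
    rw [hA2]; exact hQge
  have hApos : 0 < ‖(c:ℂ) * z + (d:ℂ)‖ := by
    rcases (norm_nonneg ((c:ℂ) * z + (d:ℂ))).lt_or_eq with h | h
    · exact h
    · exfalso
      have : ‖(c:ℂ) * z + (d:ℂ)‖ ^ 2 = 0 := by rw [← h]; ring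
      nlinarith [hQA, ht2, this]
  have hBpos : 0 < ‖((1:ℤ):ℂ) * z + ((0:ℤ):ℂ)‖ := by
    have h' : (0:ℝ)^2 < ‖((1:ℤ):ℂ) * z + ((0:ℤ):ℂ)‖ ^ 2 := by
      rw [hB2]; nlinarith [ht2]
    exact lt_of_pow_lt_pow_left₀ 2 (norm_nonneg _) h'
  set A : ℝ := ‖(c:ℂ) * z + (d:ℂ)‖ with hA
  set B : ℝ := ‖((1:ℤ):ℂ) * z + ((0:ℤ):ℂ)‖ with hB
  have hCpos : 0 < 2 * Real.pi * α * t := by positivity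
  have hCle : 2 * Real.pi * α * t ≤ Real.sqrt 3 * Real.log 3 / 2 * t := by
    rw [le_div_iff₀ (by positivity)] at hα2
    nlinarith [mul_nonneg ht0.le (sub_nonneg.mpr hα2)]
  have hkey := key_ineq t (2 * Real.pi * α * t) (A^2) ht hCpos hCle hQA
  -- unfold rP
  rw [rP, rP, him]
  rw [div_lt_div_iff₀ hApos hBpos]
  have e1 : -2 * Real.pi * α * t / A^2 = -(2 * Real.pi * α * t / A^2) := by ring
  have e2 : -2 * Real.pi * α * t / B^2 = -(2 * Real.pi * α * t / B^2) := by ring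
  rw [e1, e2]
  have hlogA : Real.log A = Real.log (A^2) / 2 := by
    rw [Real.log_pow]; push_cast; ring
  have hlogB : Real.log B = Real.log (B^2) / 2 := by
    rw [Real.log_pow]; push_cast; ring
  calc Real.exp (-(2 * Real.pi * α * t / A^2)) * B
      = Real.exp (-(2 * Real.pi * α * t / A^2) + Real.log B) := by
        rw [Real.exp_add, Real.exp_log hBpos]
    _ < Real.exp (-(2 * Real.pi * α * t / B^2) + Real.log A) := by
        apply Real.exp_lt_exp.mpr
        rw [hlogA, hlogB, hB2]
        linarith [hkey]
    _ = Real.exp (-(2 * Real.pi * α * t / B^2)) * A := by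
        rw [Real.exp_add, Real.exp_log hApos]
end

section
/- For all coprime integers (c,d) with c ≥ 1 and (c,d) ∉ {(1,0), (1,−1)}, and all real t ≥ √3/2, we have c²(1/4 + t²) + cd + d² ≥ (1/4 + t²) + 2; equivalently, |c(1/2 + it) + d|² ≥ |1/2 + it|² + 2. -/
open Filter Topology Set

/-- for coprime `(c,d)` with `c ≥ 1`, `(c,d) ∉ {(1,0),(1,-1)}`, and
`t ≥ √3/2`: `c²(1/4+t²) + cd + d² ≥ (1/4+t²) + 2`, equivalently
`|c(1/2+it) + d|² ≥ |1/2+it|² + 2`. -/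
theorem s_ge_one_plus_two (c d : ℤ) (hcd : IsCoprime c d) (hc : 1 ≤ c)
    (h1 : (c, d) ≠ (1, 0)) (h2 : (c, d) ≠ (1, -1))
    (t : ℝ) (ht : Real.sqrt 3 / 2 ≤ t) :
    (1/4 + t^2) + 2 ≤ (c : ℝ)^2 * (1/4 + t^2) + (c : ℝ) * (d : ℝ) + (d : ℝ)^2 ∧
    ‖1/2 + t * Complex.I‖ ^ 2 + 2 ≤
      ‖(c : ℂ) * (1/2 + t * Complex.I) + (d : ℂ)‖ ^ 2 := by
  have ht0 : (0:ℝ) ≤ t := le_trans (by positivity) ht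
  have ht2 : (3:ℝ)/4 ≤ t^2 := by
    nlinarith [Real.sq_sqrt (by norm_num : (0:ℝ) ≤ 3), Real.sqrt_nonneg 3]
  have key : (1/4 + t^2) + 2 ≤ (c : ℝ)^2 * (1/4 + t^2) + (c : ℝ) * (d : ℝ) + (d : ℝ)^2 := by
    rcases eq_or_lt_of_le hc with h | h
    · have hc1 : (c:ℝ) = 1 := by exact_mod_cast h.symm
      have hd0 : d ≠ 0 := fun hd => h1 (by simp [← h, hd])
      have hdm1 : d ≠ -1 := fun hd => h2 (by simp [← h, hd])
      have : 1 ≤ d ∨ d ≤ -2 := by omega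
      rcases this with hd | hd
      · have : (1:ℝ) ≤ (d:ℝ) := by exact_mod_cast hd
        rw [hc1]; nlinarith
      · have : (d:ℝ) ≤ -2 := by exact_mod_cast hd
        rw [hc1]; nlinarith
    · have hc2 : (2:ℝ) ≤ (c:ℝ) := by exact_mod_cast h
      nlinarith [sq_nonneg ((c:ℝ)/2 + (d:ℝ)), sq_nonneg ((c:ℝ) - 2)]
  refine ⟨key, ?_⟩
  have e1 : ‖1/2 + t * Complex.I‖ ^ 2 = 1/4 + t^2 := by
    rw [Complex.sq_norm, Complex.normSq_apply]
    simp
    ring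
  have e2 : ‖(c : ℂ) * (1/2 + t * Complex.I) + (d : ℂ)‖ ^ 2
      = (c : ℝ)^2 * (1/4 + t^2) + (c : ℝ) * (d : ℝ) + (d : ℝ)^2 := by
    rw [Complex.sq_norm, Complex.normSq_apply]
    simp
    ring
  rw [e1, e2]; exact key
end

section
/- For every even integer k ≥ 4, every nonnegative integer m, and every real t > 0, σ_{1,1}(it) + σ_{1,−1}(it) = 2 · exp(−2πmt/(t² + 1)) · (t² + 1)^{−k/2} · cos( 2πm · t²/(t² + 1) − k · arctan(t) ). -/
open Filter Topology Set

/-- `σ_{1,1}(it) + σ_{1,-1}(it)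
  = 2·exp(-2πmt/(t²+1))·(t²+1)^{-k/2}·cos(2πm·t²/(t²+1) - k·arctan t)`. -/
theorem sigma_sum_lineI (k m : ℕ) (hke : Even k) (hk4 : 4 ≤ k)
    (t : ℝ) (ht : 0 < t) :
    sigmaP k m 1 1 (t * Complex.I) + sigmaP k m 1 (-1) (t * Complex.I) =
      ((2 * Real.exp (-2 * Real.pi * (m : ℝ) * t / (t^2 + 1)) *
          (t^2 + 1) ^ (-(k : ℝ)/2) *
          Real.cos (2 * Real.pi * (m : ℝ) * t^2 / (t^2 + 1)
            - (k : ℝ) * Real.arctan t) : ℝ) : ℂ) := by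
  obtain ⟨j, hj⟩ := hke
  have hs : (0:ℝ) < t^2 + 1 := by positivity
  have hr : (0:ℝ) < Real.sqrt (t^2 + 1) := Real.sqrt_pos.2 hs
  set r : ℝ := Real.sqrt (t^2 + 1) with hrdef
  have hrne : (r : ℂ) ≠ 0 := by exact_mod_cast hr.ne'
  set θ1 : ℝ := Real.arctan t with hθ1def
  set x0 : ℝ := -2 * Real.pi * m * t / (t^2 + 1) with hx0def
  set y0 : ℝ := 2 * Real.pi * m / (t^2 + 1) with hy0def
  set θ : ℝ := 2 * Real.pi * (m : ℝ) * t^2 / (t^2 + 1) - (k : ℝ) * θ1 with hθdef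
  have gA1 : ((Int.gcdA 1 1 : ℤ) : ℂ) = 1 := by
    have : Int.gcdA 1 1 = 1 := by
      show Nat.gcdA 1 1 = 1
      rw [Nat.gcdA, Nat.xgcd, Nat.xgcdAux_rec Nat.one_pos, Nat.xgcd_zero_left]
    rw [this]; norm_num
  have gB1 : ((Int.gcdB 1 1 : ℤ) : ℂ) = 0 := by
    have : Int.gcdB 1 1 = 0 := by
      show Nat.gcdB 1 1 = 0
      rw [Nat.gcdB, Nat.xgcd, Nat.xgcdAux_rec Nat.one_pos, Nat.xgcd_zero_left]
    rw [this]; norm_num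
  have gA2 : ((Int.gcdA 1 (-1) : ℤ) : ℂ) = 1 := by
    have : Int.gcdA 1 (-1) = 1 := by
      show Nat.gcdA 1 1 = 1
      rw [Nat.gcdA, Nat.xgcd, Nat.xgcdAux_rec Nat.one_pos, Nat.xgcd_zero_left]
    rw [this]; norm_num
  have gB2 : ((Int.gcdB 1 (-1) : ℤ) : ℂ) = 0 := by
    have : Int.gcdB 1 (-1) = 0 := by
      show -(Nat.gcdB 1 1) = 0
      rw [Nat.gcdB, Nat.xgcd, Nat.xgcdAux_rec Nat.one_pos, Nat.xgcd_zero_left]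
      rfl
    rw [this]; norm_num
  have hsqrt : Real.sqrt (1 + t^2) = r := by rw [hrdef, add_comm]
  have hsqne : Real.sqrt (1 + t^2) ≠ 0 := by rw [hsqrt]; exact hr.ne'
  have hw1 : ((1:ℤ) : ℂ) * (t * Complex.I) + ((1:ℤ) : ℂ)
      = (r : ℂ) * Complex.exp ((θ1 : ℝ) * Complex.I) := by
    rw [Complex.exp_mul_I, ← Complex.ofReal_cos, ← Complex.ofReal_sin]
    rw [hθ1def, Real.cos_arctan, Real.sin_arctan, hsqrt]
    push_cast
    rw [Complex.ext_iff]
    constructor <;> simp <;> field_simp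
  have hw2 : ((1:ℤ) : ℂ) * (t * Complex.I) + ((-1:ℤ) : ℂ)
      = (r : ℂ) * Complex.exp (((Real.pi - θ1 : ℝ) : ℂ) * Complex.I) := by
    rw [Complex.exp_mul_I, ← Complex.ofReal_cos, ← Complex.ofReal_sin,
      Real.cos_pi_sub, Real.sin_pi_sub]
    rw [hθ1def, Real.cos_arctan, Real.sin_arctan, hsqrt]
    push_cast
    rw [Complex.ext_iff]
    constructor <;> simp <;> field_simp
  have hw1ne : ((1:ℤ) : ℂ) * (t * Complex.I) + ((1:ℤ) : ℂ) ≠ 0 := by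
    rw [hw1]; exact mul_ne_zero hrne (Complex.exp_ne_zero _)
  have hw2ne : ((1:ℤ) : ℂ) * (t * Complex.I) + ((-1:ℤ) : ℂ) ≠ 0 := by
    rw [hw2]; exact mul_ne_zero hrne (Complex.exp_ne_zero _)
  have hA1 : 2 * (Real.pi : ℂ) * Complex.I * (m : ℂ) *
      (((Int.gcdB 1 1 : ℤ) : ℂ) * (t * Complex.I) - ((Int.gcdA 1 1 : ℤ) : ℂ)) /
        (((1:ℤ) : ℂ) * (t * Complex.I) + ((1:ℤ) : ℂ))
      = ((x0 : ℝ) : ℂ) + ((-y0 : ℝ) : ℂ) * Complex.I := by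
    rw [gA1, gB1, div_eq_iff hw1ne]
    rw [Complex.ext_iff]
    constructor
    · simp
      rw [hx0def, hy0def]
      field_simp
      ring
    · simp
      rw [hx0def, hy0def]
      field_simp
      ring
  have hA2 : 2 * (Real.pi : ℂ) * Complex.I * (m : ℂ) *
      (((Int.gcdB 1 (-1) : ℤ) : ℂ) * (t * Complex.I) - ((Int.gcdA 1 (-1) : ℤ) : ℂ)) /
        (((1:ℤ) : ℂ) * (t * Complex.I) + ((-1:ℤ) : ℂ))
      = ((x0 : ℝ) : ℂ) + ((y0 : ℝ) : ℂ) * Complex.I := by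
    rw [gA2, gB2, div_eq_iff hw2ne]
    rw [Complex.ext_iff]
    constructor
    · simp
      rw [hx0def, hy0def]
      field_simp
      ring
    · simp
      rw [hx0def, hy0def]
      field_simp
      ring
  have key : ∀ (x y φ : ℝ), Complex.exp ((x:ℂ) + (y:ℂ) * Complex.I) /
      ((r : ℂ) * Complex.exp ((φ:ℝ) * Complex.I)) ^ k
      = (Real.exp x : ℂ) * Complex.exp (((y - k * φ : ℝ) : ℂ) * Complex.I) / (r:ℂ) ^ k := by
    intro x y φ
    have h1 : (k : ℂ) * ((φ:ℂ) * Complex.I) = (((k * φ : ℝ)) : ℂ) * Complex.I := by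
      push_cast; ring
    have h2 : ((x:ℂ) + (y:ℂ) * Complex.I) =
        (x:ℂ) + ((((y - k * φ : ℝ)) : ℂ) * Complex.I + (((k * φ : ℝ)) : ℂ) * Complex.I) := by
      push_cast; ring
    rw [mul_pow, ← Complex.exp_nat_mul, h1, h2, Complex.exp_add, Complex.exp_add,
      Complex.ofReal_exp,
      div_eq_div_iff (mul_ne_zero (pow_ne_zero _ hrne) (Complex.exp_ne_zero _))
        (pow_ne_zero _ hrne)]
    ring
  rw [sigmaP, sigmaP, hA1, hA2, hw1, hw2, key, key]
  have hc1 : Real.cos (-y0 - k * θ1) = Real.cos θ := by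
    have h : -y0 - (k:ℝ) * θ1 = θ - (m : ℤ) * (2 * Real.pi) := by
      rw [hθdef, hy0def]; push_cast; field_simp; ring
    rw [h, Real.cos_sub_int_mul_two_pi]
  have hs1 : Real.sin (-y0 - k * θ1) = Real.sin θ := by
    have h : -y0 - (k:ℝ) * θ1 = θ + (-(m : ℤ)) * (2 * Real.pi) := by
      rw [hθdef, hy0def]; push_cast; field_simp; ring
    rw [h]; exact_mod_cast Real.sin_add_int_mul_two_pi θ (-(m:ℤ))
  have hc2 : Real.cos (y0 - k * (Real.pi - θ1)) = Real.cos θ := by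
    have h : y0 - (k:ℝ) * (Real.pi - θ1) = -θ + ((m : ℤ) - (j : ℤ)) * (2 * Real.pi) := by
      rw [hθdef, hy0def, hj]; push_cast; field_simp; ring
    rw [h]
    calc Real.cos (-θ + ((m:ℤ) - (j:ℤ) : ℝ) * (2 * Real.pi))
        = Real.cos (-θ + (((m:ℤ) - (j:ℤ) : ℤ) : ℝ) * (2 * Real.pi)) := by norm_num
      _ = Real.cos (-θ) := Real.cos_add_int_mul_two_pi _ _
      _ = Real.cos θ := Real.cos_neg _
  have hs2 : Real.sin (y0 - k * (Real.pi - θ1)) = -Real.sin θ := by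
    have h : y0 - (k:ℝ) * (Real.pi - θ1) = -θ + ((m : ℤ) - (j : ℤ)) * (2 * Real.pi) := by
      rw [hθdef, hy0def, hj]; push_cast; field_simp; ring
    rw [h]
    calc Real.sin (-θ + ((m:ℤ) - (j:ℤ) : ℝ) * (2 * Real.pi))
        = Real.sin (-θ + (((m:ℤ) - (j:ℤ) : ℤ) : ℝ) * (2 * Real.pi)) := by norm_num
      _ = Real.sin (-θ) := Real.sin_add_int_mul_two_pi _ _
      _ = -Real.sin θ := Real.sin_neg _
  have hpow : (t^2 + 1) ^ (-(k : ℝ)/2) = (r ^ k)⁻¹ := by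
    rw [hrdef, Real.sqrt_eq_rpow, ← Real.rpow_natCast ((t^2+1) ^ (1/(2:ℝ))) k,
      ← Real.rpow_mul hs.le]
    rw [show -(k:ℝ)/2 = -(1/(2:ℝ) * k) by ring, Real.rpow_neg hs.le]
  rw [Complex.exp_mul_I, Complex.exp_mul_I, ← Complex.ofReal_cos, ← Complex.ofReal_sin,
    ← Complex.ofReal_cos, ← Complex.ofReal_sin, hc1, hs1, hc2, hs2, hpow]
  have hrk : ((r : ℂ)) ^ k ≠ 0 := pow_ne_zero _ hrne
  rw [← add_div, div_eq_iff hrk]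
  push_cast
  field_simp
  ring
end

section
/- Let log(2)/(2π) < α ≤ 1/(2π). Then for every pair (c,d) ∈ 𝒫 with (c,d) ∉ {(1,1), (1,−1)}, we have r_{c,d}(i) < r_{1,1}(i); explicitly, exp(−2πα/(c² + d²)) · (c² + d²)^{−1/2} < exp(−πα)/√2. -/
open Filter Topology Set

lemma key_ineq_r11 (α : ℝ) (hα1 : Real.log 2 / (2 * Real.pi) < α)
    (hα2 : α ≤ 1 / (2 * Real.pi)) (S : ℝ) (hS : S = 1 ∨ 3 ≤ S) :
    Real.exp (-2 * Real.pi * α / S) / Real.sqrt S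
      < Real.exp (-Real.pi * α) / Real.sqrt 2 := by
  have hπ := Real.pi_pos
  have hlog2 : (0:ℝ) < Real.log 2 := Real.log_pos (by norm_num)
  have hα0 : 0 < α := lt_trans (by positivity) hα1
  have hαπ : Real.log 2 < 2 * Real.pi * α := by
    rw [div_lt_iff₀ (by positivity)] at hα1; linarith
  have hπα : Real.pi * α ≤ 1 / 2 := by
    rw [le_div_iff₀ (by positivity)] at hα2; linarith
  have hS0 : (0:ℝ) < S := by rcases hS with h | h <;> linarith
  rw [div_lt_div_iff₀ (Real.sqrt_pos.mpr hS0) (Real.sqrt_pos.mpr (by norm_num))]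
  have hs2 : Real.sqrt 2 = Real.exp (Real.log 2 / 2) := by
    rw [Real.exp_half, Real.exp_log (by norm_num)]
  have hSs : Real.sqrt S = Real.exp (Real.log S / 2) := by
    rw [Real.exp_half, Real.exp_log hS0]
  rw [hs2, hSs, ← Real.exp_add, ← Real.exp_add, Real.exp_lt_exp]
  rcases hS with h | h
  · subst h
    simp only [Real.log_one]
    have h1 : -2 * Real.pi * α / 1 = -2 * Real.pi * α := by ring
    rw [h1]
    linarith
  · have hne : 2 / S ≠ 1 := by
      intro hh
      rw [div_eq_one_iff_eq (ne_of_gt hS0)] at hh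
      linarith
    have hlog : Real.log (2 / S) < 2 / S - 1 :=
      Real.log_lt_sub_one_of_pos (by positivity) hne
    rw [Real.log_div (by norm_num) (ne_of_gt hS0)] at hlog
    have hlogS : S * (Real.log 2 - Real.log S) < 2 - S := by
      have := mul_lt_mul_of_pos_left hlog hS0
      calc S * (Real.log 2 - Real.log S) < S * (2 / S - 1) := this
        _ = 2 - S := by field_simp
    have heq : -2 * Real.pi * α / S + Real.log 2 / 2
        - (-Real.pi * α + Real.log S / 2)
        = (-4 * Real.pi * α + S * Real.log 2 + 2 * Real.pi * α * S
            - S * Real.log S) / (2 * S) := by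
      field_simp
      ring
    rw [← sub_neg, heq]
    apply div_neg_of_neg_of_pos _ (by positivity)
    have hmul : 2 * (Real.pi * α) * (S - 2) ≤ 1 * (S - 2) :=
      mul_le_mul_of_nonneg_right (by linarith) (by linarith)
    linarith [hmul, hlogS]

lemma abs_ci_r11 (c d : ℤ) :
    ‖(c : ℂ) * Complex.I + (d : ℂ)‖ = Real.sqrt ((c : ℝ)^2 + (d : ℝ)^2) := by
  rw [Complex.norm_def, Complex.normSq_apply]
  simp only [Complex.add_re, Complex.add_im, Complex.mul_re, Complex.mul_im,
    Complex.I_re, Complex.I_im, Complex.intCast_re, Complex.intCast_im]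
  congr 1
  ring

lemma rP_eval_r11 (α : ℝ) (c d : ℤ) :
    rP α c d Complex.I
      = Real.exp (-2 * Real.pi * α / ((c : ℝ)^2 + (d : ℝ)^2))
          / Real.sqrt ((c : ℝ)^2 + (d : ℝ)^2) := by
  unfold rP
  rw [abs_ci_r11, Real.sq_sqrt (by positivity), Complex.I_im, mul_one]

/-- for `log 2/(2π) < α ≤ 1/(2π)` and `(c,d) ∈ 𝒫` with
`(c,d) ∉ {(1,1),(1,-1)}`: `r_{c,d}(i) < r_{1,1}(i)`; explicitly
`exp(-2πα/(c²+d²))·(c²+d²)^{-1/2} < exp(-πα)/√2`. -/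
theorem r11_max_at_i (α : ℝ) (hα1 : Real.log 2 / (2 * Real.pi) < α)
    (hα2 : α ≤ 1 / (2 * Real.pi))
    (c d : ℤ) (hp : (c, d) ∈ Pset) (h1 : (c, d) ≠ (1, 1)) (h2 : (c, d) ≠ (1, -1)) :
    rP α c d Complex.I < rP α 1 1 Complex.I ∧
    Real.exp (-2 * Real.pi * α / ((c : ℝ)^2 + (d : ℝ)^2)) *
        ((c : ℝ)^2 + (d : ℝ)^2) ^ (-(1:ℝ)/2)
      < Real.exp (-Real.pi * α) / Real.sqrt 2 := by
  have hnZ : (c^2 + d^2 = 1 ∨ 3 ≤ c^2 + d^2) := by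
    rcases hp with ⟨_, hc⟩ | hp
    · by_cases hcase : c^2 + d^2 = 1
      · exact Or.inl hcase
      · right
        by_contra hlt
        push_neg at hlt
        have hd2 : 0 ≤ d^2 := sq_nonneg d
        have hc2 : 1 ≤ c^2 := by nlinarith
        have hgt : 1 < c^2 + d^2 := lt_of_le_of_ne (by linarith) (Ne.symm hcase)
        have hn2 : c^2 + d^2 = 2 := by linarith
        have hcle : c ≤ 1 := by nlinarith
        have hc1 : c = 1 := le_antisymm hcle hc
        have hdsq : d * d = 1 := by nlinarith
        have hdu : d = 1 ∨ d = -1 :=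
          Int.isUnit_iff.mp (IsUnit.of_mul_eq_one d hdsq)
        rcases hdu with hd | hd
        · exact h1 (by rw [hc1, hd])
        · exact h2 (by rw [hc1, hd])
    · left
      have hc : c = 0 := congrArg Prod.fst hp
      have hd : d = 1 := congrArg Prod.snd hp
      rw [hc, hd]; norm_num
  have hS : ((c : ℝ)^2 + (d : ℝ)^2 = 1 ∨ 3 ≤ (c : ℝ)^2 + (d : ℝ)^2) := by
    rcases hnZ with h | h
    · left; exact_mod_cast h
    · right; exact_mod_cast h
  have hkey := key_ineq_r11 α hα1 hα2 _ hS
  have hr11 : rP α 1 1 Complex.I = Real.exp (-Real.pi * α) / Real.sqrt 2 := by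
    rw [rP_eval_r11]
    norm_num
    rw [show -(2 * Real.pi * α) / 2 = -(Real.pi * α) by ring]
  constructor
  · rw [rP_eval_r11, hr11]; exact hkey
  · have hpow : ((c : ℝ)^2 + (d : ℝ)^2) ^ (-(1:ℝ)/2)
        = (Real.sqrt ((c : ℝ)^2 + (d : ℝ)^2))⁻¹ := by
      rw [show (-(1:ℝ)/2) = -(1/2 : ℝ) by norm_num,
        Real.rpow_neg (by positivity), ← Real.sqrt_eq_rpow]
    rw [hpow, ← div_eq_mul_inv]
    exact hkey
end
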